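/- arXiv:1208.4319 — 4 statements merged into one kernel-verified Lean document; each statement's English description precedes it below -/
import Mathlib

section
/- For r ≥ 2 and F = K_{r+2} − e (the complete graph on r+2 vertices minus one edge), the number of copies of F in the graph obtained from the complete r-partite graph with parts of sizes n₁, …, n_r by adding one edge inside the first part equals ((n − n₁ − r + 1)/2) · ∏_{i=2}^{r} n_i, where n = n₁ + … + n_r. Equivalently, it equals (∑_{i=2}^r C(n_i,2) ∏_{2≤j≤r, j≠i} n_j). -/
open Finset

/-- The number of copies of `F` in `H`: the number of subgraphs of `H`
isomorphic to `F`. -/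
noncomputable def copyCount {α β : Type*} (F : SimpleGraph α) (H : SimpleGraph β) : ℕ :=
  Set.ncard {H' : H.Subgraph | Nonempty (H'.coe ≃g F)}

/-- `K_{r+2}` minus one edge. -/
def cliqueMinusEdge (r : ℕ) : SimpleGraph (Fin (r + 2)) :=
  (⊤ : SimpleGraph (Fin (r + 2))).deleteEdges {s(0, 1)}

namespace TuranPlusAux

variable {r : ℕ} {n : Fin r → ℕ}

/-- Parameter type: a part `i`, a pair in part `i`, and one vertex in each other part. -/
abbrev Par (n : Fin r → ℕ) (i0 : Fin r) : Type _ :=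
  Σ i : Fin r, Finset (Fin (n i)) × (∀ j ∈ (univ.erase i0).erase i, Fin (n j))

/-- The parameter finset. -/
def P (n : Fin r → ℕ) (i0 : Fin r) : Finset (Par n i0) :=
  (univ.erase i0).sigma fun i =>
    (powersetCard 2 (univ : Finset (Fin (n i)))) ×ˢ
      ((univ.erase i0).erase i).pi fun j => (univ : Finset (Fin (n j)))

lemma mem_P {i0 : Fin r} {p : Par n i0} :
    p ∈ P n i0 ↔ p.1 ≠ i0 ∧ p.2.1.card = 2 := by
  obtain ⟨i, e, g⟩ := p
  rw [P, Finset.mem_sigma, Finset.mem_product, Finset.mem_powersetCard_univ]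
  simp [Finset.mem_pi]

lemma card_P {i0 : Fin r} :
    (P n i0).card = ∑ i ∈ univ.erase i0,
      (n i).choose 2 * ∏ j ∈ (univ.erase i0).erase i, n j := by
  rw [P, Finset.card_sigma]
  refine Finset.sum_congr rfl fun i _ => ?_
  rw [Finset.card_product, Finset.card_powersetCard, Finset.card_pi]
  simp

/-- The vertex set associated to a parameter. -/
def T (i0 : Fin r) (x y : Fin (n i0)) (p : Par n i0) : Finset (Σ i : Fin r, Fin (n i)) :=
  insert ⟨i0, x⟩ (insert ⟨i0, y⟩
    ((p.2.1.image fun c => (⟨p.1, c⟩ : Σ i : Fin r, Fin (n i))) ∪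
     ((univ.erase i0).erase p.1).attach.image
       fun j => (⟨j.1, p.2.2 j.1 j.2⟩ : Σ i : Fin r, Fin (n i))))

lemma mem_T {i0 : Fin r} {x y : Fin (n i0)} {p : Par n i0} {v : Σ i : Fin r, Fin (n i)} :
    v ∈ T i0 x y p ↔ v = ⟨i0, x⟩ ∨ v = ⟨i0, y⟩ ∨ (∃ c ∈ p.2.1, v = ⟨p.1, c⟩) ∨
      ∃ j, ∃ hj : j ∈ (univ.erase i0).erase p.1, v = ⟨j, p.2.2 j hj⟩ := by
  simp only [T, Finset.mem_insert, Finset.mem_union, Finset.mem_image, Finset.mem_attach,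
    true_and, Subtype.exists, eq_comm]

section Structure

variable {i0 : Fin r} {x y : Fin (n i0)} {p : Par n i0} {v u : Σ i : Fin r, Fin (n i)}

lemma fst_i0 (hp1 : p.1 ≠ i0) (hv : v ∈ T i0 x y p) (h1 : v.1 = i0) :
    v = ⟨i0, x⟩ ∨ v = ⟨i0, y⟩ := by
  rcases mem_T.1 hv with h | h | ⟨c, hc, h⟩ | ⟨j, hj, h⟩
  · exact Or.inl h
  · exact Or.inr h
  · subst h; exact absurd h1 hp1
  · subst h; exact absurd h1 (Finset.mem_erase.1 (Finset.mem_erase.1 hj).2).1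

lemma fst_pi (hp1 : p.1 ≠ i0) (hv : v ∈ T i0 x y p) (h1 : v.1 = p.1) :
    ∃ c ∈ p.2.1, v = ⟨p.1, c⟩ := by
  rcases mem_T.1 hv with h | h | ⟨c, hc, h⟩ | ⟨j, hj, h⟩
  · subst h; exact absurd h1.symm hp1
  · subst h; exact absurd h1.symm hp1
  · exact ⟨c, hc, h⟩
  · subst h; exact absurd h1 (Finset.mem_erase.1 hj).1

lemma fst_other (hv : v ∈ T i0 x y p) (hj : v.1 ∈ (univ.erase i0).erase p.1) :
    v = ⟨v.1, p.2.2 v.1 hj⟩ := by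
  rcases mem_T.1 hv with h | h | ⟨c, hc, h⟩ | ⟨j, hj', h⟩
  · subst h; exact absurd rfl (Finset.mem_erase.1 (Finset.mem_erase.1 hj).2).1
  · subst h; exact absurd rfl (Finset.mem_erase.1 (Finset.mem_erase.1 hj).2).1
  · subst h; exact absurd rfl (Finset.mem_erase.1 hj).1
  · subst h; rfl

lemma samefst {c₀ c₁ : Fin (n p.1)} (hp1 : p.1 ≠ i0) (hc : c₀ ≠ c₁)
    (he : p.2.1 = {c₀, c₁}) (hu : u ∈ T i0 x y p) (hv : v ∈ T i0 x y p)
    (hne : u ≠ v) (hfst : u.1 = v.1) :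
    s(u, v) = s((⟨i0, x⟩ : Σ i : Fin r, Fin (n i)), ⟨i0, y⟩) ∨
      s(u, v) = s((⟨p.1, c₀⟩ : Σ i : Fin r, Fin (n i)), ⟨p.1, c₁⟩) := by
  rcases mem_T.1 hu with h | h | ⟨c, hc', h⟩ | ⟨j, hj, h⟩
  · subst h
    rcases fst_i0 hp1 hv hfst.symm with h | h
    · exact absurd h.symm hne
    · subst h; exact Or.inl rfl
  · subst h
    rcases fst_i0 hp1 hv hfst.symm with h | h
    · subst h; exact Or.inl (Sym2.eq_swap)
    · exact absurd h.symm hne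
  · subst h
    obtain ⟨c', hc'', h⟩ := fst_pi hp1 hv hfst.symm
    subst h
    rw [he, Finset.mem_insert, Finset.mem_singleton] at hc' hc''
    have hcc : c ≠ c' := fun hcc => hne (by rw [hcc])
    rcases hc' with rfl | rfl <;> rcases hc'' with rfl | rfl
    · exact absurd rfl hcc
    · exact Or.inr rfl
    · exact Or.inr Sym2.eq_swap
    · exact absurd rfl hcc
  · subst h
    obtain ⟨vj, vc⟩ := v
    have hjv : j = vj := hfst
    subst hjv
    exact absurd (fst_other hv hj).symm hne

lemma card_T (hr : 2 ≤ r) (hxy : x ≠ y) (hp : p ∈ P n i0) :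
    (T i0 x y p).card = r + 2 := by
  obtain ⟨hp1, he2⟩ := mem_P.1 hp
  have hs : ((univ.erase i0).erase p.1).card = r - 2 := by
    rw [Finset.card_erase_of_mem (Finset.mem_erase.2 ⟨hp1, Finset.mem_univ _⟩),
      Finset.card_erase_of_mem (Finset.mem_univ _), Finset.card_univ, Fintype.card_fin]
    omega
  have hAcard : (p.2.1.image fun c => (⟨p.1, c⟩ : Σ i : Fin r, Fin (n i))).card = 2 := by
    rw [Finset.card_image_of_injective _ sigma_mk_injective, he2]
  have hBcard : (((univ.erase i0).erase p.1).attach.image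
      fun j => (⟨j.1, p.2.2 j.1 j.2⟩ : Σ i : Fin r, Fin (n i))).card = r - 2 := by
    rw [Finset.card_image_of_injOn, Finset.card_attach, hs]
    intro j₁ _ j₂ _ h
    have : j₁.1 = j₂.1 := congrArg Sigma.fst h
    exact Subtype.ext this
  have hdisj : Disjoint (p.2.1.image fun c => (⟨p.1, c⟩ : Σ i : Fin r, Fin (n i)))
      (((univ.erase i0).erase p.1).attach.image
        fun j => (⟨j.1, p.2.2 j.1 j.2⟩ : Σ i : Fin r, Fin (n i))) := by
    rw [Finset.disjoint_left]
    rintro v hv1 hv2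
    simp only [Finset.mem_image, Finset.mem_attach, true_and, Subtype.exists] at hv1 hv2
    obtain ⟨c, _, rfl⟩ := hv1
    obtain ⟨j, hj, h⟩ := hv2
    exact (Finset.mem_erase.1 hj).1 (congrArg Sigma.fst h)
  have hy : (⟨i0, y⟩ : Σ i : Fin r, Fin (n i)) ∉
      (p.2.1.image fun c => (⟨p.1, c⟩ : Σ i : Fin r, Fin (n i))) ∪
      (((univ.erase i0).erase p.1).attach.image
        fun j => (⟨j.1, p.2.2 j.1 j.2⟩ : Σ i : Fin r, Fin (n i))) := by
    simp only [Finset.mem_union, Finset.mem_image, Finset.mem_attach, true_and, Subtype.exists]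
    rintro (⟨c, _, h⟩ | ⟨j, hj, h⟩)
    · exact hp1 (congrArg Sigma.fst h)
    · exact (Finset.mem_erase.1 (Finset.mem_erase.1 hj).2).1 (congrArg Sigma.fst h)
  have hx : (⟨i0, x⟩ : Σ i : Fin r, Fin (n i)) ∉ insert (⟨i0, y⟩ : Σ i : Fin r, Fin (n i))
      ((p.2.1.image fun c => (⟨p.1, c⟩ : Σ i : Fin r, Fin (n i))) ∪
      (((univ.erase i0).erase p.1).attach.image
        fun j => (⟨j.1, p.2.2 j.1 j.2⟩ : Σ i : Fin r, Fin (n i)))) := by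
    simp only [Finset.mem_insert, Finset.mem_union, Finset.mem_image, Finset.mem_attach,
      true_and, Subtype.exists]
    rintro (h | ⟨c, _, h⟩ | ⟨j, hj, h⟩)
    · exact hxy (by simpa using h)
    · exact hp1 (congrArg Sigma.fst h)
    · exact (Finset.mem_erase.1 (Finset.mem_erase.1 hj).2).1 (congrArg Sigma.fst h)
  rw [T, Finset.card_insert_of_notMem hx, Finset.card_insert_of_notMem hy,
    Finset.card_union_of_disjoint hdisj, hAcard, hBcard]
  omega

lemma key_adj {H : SimpleGraph (Σ i : Fin r, Fin (n i))}
    (hH : H = SimpleGraph.completeMultipartiteGraph (fun i => Fin (n i)) ⊔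
      SimpleGraph.fromEdgeSet {s((⟨i0, x⟩ : Σ i : Fin r, Fin (n i)), ⟨i0, y⟩)})
    {c₀ c₁ : Fin (n p.1)} (hp1 : p.1 ≠ i0) (hc : c₀ ≠ c₁) (he : p.2.1 = {c₀, c₁})
    (hu : u ∈ T i0 x y p) (hv : v ∈ T i0 x y p) :
    H.Adj u v ↔ u ≠ v ∧ s(u, v) ≠ s((⟨p.1, c₀⟩ : Σ i : Fin r, Fin (n i)), ⟨p.1, c₁⟩) := by
  subst hH
  simp only [SimpleGraph.sup_adj, SimpleGraph.comap_adj, SimpleGraph.top_adj,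
    SimpleGraph.fromEdgeSet_adj, Set.mem_singleton_iff]
  constructor
  · rintro (h | ⟨hs, hne⟩)
    · refine ⟨fun hne => h (congrArg Sigma.fst hne), fun hs => ?_⟩
      rcases Sym2.eq_iff.1 hs with ⟨rfl, rfl⟩ | ⟨rfl, rfl⟩ <;> exact h rfl
    · refine ⟨hne, fun hs' => ?_⟩
      rcases Sym2.eq_iff.1 hs' with ⟨hu', hv'⟩ | ⟨hu', hv'⟩ <;>
      rcases Sym2.eq_iff.1 hs with ⟨hu'', hv''⟩ | ⟨hu'', hv''⟩ <;>
        exact hp1 (congrArg Sigma.fst (hu'.symm.trans hu''))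
  · rintro ⟨hne, hs⟩
    by_cases hfst : u.1 = v.1
    · rcases samefst hp1 hc he hu hv hne hfst with h | h
      · exact Or.inr ⟨h, hne⟩
      · exact absurd h hs
    · exact Or.inl hfst

lemma sym2_map_eq {α β : Type*} {w : α → β} (hw : Function.Injective w) {p q p' q' : α} :
    s(w p, w q) = s(w p', w q') ↔ s(p, q) = s(p', q') := by
  simp [Sym2.eq_iff, hw.eq_iff]

lemma cliqueMinusEdge_adj {r : ℕ} {a b : Fin (r + 2)} :
    (cliqueMinusEdge r).Adj a b ↔ a ≠ b ∧ s(a, b) ≠ s(0, 1) := by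
  simp [cliqueMinusEdge, SimpleGraph.deleteEdges_adj, SimpleGraph.top_adj,
    Set.mem_singleton_iff]

lemma iso_of_mem {H : SimpleGraph (Σ i : Fin r, Fin (n i))}
    (hH : H = SimpleGraph.completeMultipartiteGraph (fun i => Fin (n i)) ⊔
      SimpleGraph.fromEdgeSet {s((⟨i0, x⟩ : Σ i : Fin r, Fin (n i)), ⟨i0, y⟩)})
    (hr : 2 ≤ r) (hxy : x ≠ y) (hp : p ∈ P n i0) :
    Nonempty (((⊤ : H.Subgraph).induce ↑(T i0 x y p)).coe ≃g cliqueMinusEdge r) := by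
  obtain ⟨hp1, he2⟩ := mem_P.1 hp
  obtain ⟨c₀, c₁, hc, he⟩ := Finset.card_eq_two.1 he2
  have hu₀ : (⟨p.1, c₀⟩ : Σ i : Fin r, Fin (n i)) ∈ T i0 x y p :=
    mem_T.2 (Or.inr (Or.inr (Or.inl ⟨c₀, by rw [he]; simp, rfl⟩)))
  have hu₁ : (⟨p.1, c₁⟩ : Σ i : Fin r, Fin (n i)) ∈ T i0 x y p :=
    mem_T.2 (Or.inr (Or.inr (Or.inl ⟨c₁, by rw [he]; simp, rfl⟩)))
  let w0 : (↑(T i0 x y p) : Set (Σ i : Fin r, Fin (n i))) := ⟨_, Finset.mem_coe.2 hu₀⟩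
  let w1 : (↑(T i0 x y p) : Set (Σ i : Fin r, Fin (n i))) := ⟨_, Finset.mem_coe.2 hu₁⟩
  have hwne : w0 ≠ w1 := fun h => hc (by simpa [w0, w1] using h)
  have hcard : (T i0 x y p).card = r + 2 := card_T hr hxy hp
  let f₀ : Fin (r + 2) ≃ (↑(T i0 x y p) : Set (Σ i : Fin r, Fin (n i))) :=
    ((Equiv.subtypeEquivRight (q := fun v => v ∈ T i0 x y p) (fun v => Finset.mem_coe)).trans
      ((T i0 x y p).equivFin.trans (finCongr hcard))).symm
  let f₁ := (Equiv.swap 0 (f₀.symm w0)).trans f₀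
  have hf₁0 : f₁ 0 = w0 := by simp only [f₁, Equiv.trans_apply, Equiv.swap_apply_left, Equiv.apply_symm_apply]
  let f₂ := (Equiv.swap 1 (f₁.symm w1)).trans f₁
  have hf₂1 : f₂ 1 = w1 := by simp only [f₂, Equiv.trans_apply, Equiv.swap_apply_left, Equiv.apply_symm_apply]
  have hf₂0 : f₂ 0 = w0 := by
    have h1 : (0 : Fin (r + 2)) ≠ f₁.symm w1 := by
      intro h
      exact hwne (by rw [← hf₁0, h, Equiv.apply_symm_apply])
    simp only [f₂, Equiv.trans_apply]
    rw [Equiv.swap_apply_of_ne_of_ne (by simp) h1]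
    exact hf₁0
  have hwinj : Function.Injective
      (fun z : Fin (r + 2) => ((f₂ z : (↑(T i0 x y p) : Set (Σ i : Fin r, Fin (n i)))) :
        Σ i : Fin r, Fin (n i))) :=
    Subtype.coe_injective.comp f₂.injective
  have hpair : s((⟨p.1, c₀⟩ : Σ i : Fin r, Fin (n i)), ⟨p.1, c₁⟩) =
      s((↑(f₂ 0) : Σ i : Fin r, Fin (n i)), ↑(f₂ 1)) := by rw [hf₂0, hf₂1]
  refine ⟨SimpleGraph.Iso.symm ⟨f₂, ?_⟩⟩
  intro a b
  have hma : ↑(f₂ a) ∈ T i0 x y p := Finset.mem_coe.1 (f₂ a).2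
  have hmb : ↑(f₂ b) ∈ T i0 x y p := Finset.mem_coe.1 (f₂ b).2
  have hKA := key_adj hH hp1 hc he hma hmb
  rw [SimpleGraph.Subgraph.coe_adj, SimpleGraph.Subgraph.induce_adj,
    SimpleGraph.Subgraph.top_adj, cliqueMinusEdge_adj]
  constructor
  · rintro ⟨_, _, hadj⟩
    obtain ⟨hne, hs⟩ := hKA.1 hadj
    exact ⟨fun h => hne (by rw [h]), fun h => hs (by
      rw [hpair]; exact (sym2_map_eq hwinj).2 h)⟩
  · rintro ⟨hne, hs⟩
    exact ⟨(f₂ a).2, (f₂ b).2, hKA.2 ⟨fun h => hne (f₂.injective (Subtype.ext h)),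
      fun h => hs ((sym2_map_eq hwinj).1 (hpair ▸ h))⟩⟩

lemma mem_pi_of_mem_T {c : Fin (n p.1)} (hp1 : p.1 ≠ i0)
    (h : (⟨p.1, c⟩ : Σ i : Fin r, Fin (n i)) ∈ T i0 x y p) : c ∈ p.2.1 := by
  obtain ⟨c', hc', h'⟩ := fst_pi hp1 h rfl
  obtain rfl : c = c' := by simpa using h'
  exact hc'

lemma inj_on_P {H : SimpleGraph (Σ i : Fin r, Fin (n i))} {i0 : Fin r} {x y : Fin (n i0)} :
    Set.InjOn (fun p => (⊤ : H.Subgraph).induce ↑(T i0 x y p)) ↑(P n i0) := by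
  intro p hp q hq hpq
  rw [Finset.mem_coe, mem_P] at hp hq
  have hT : T i0 x y p = T i0 x y q := by
    have h := congrArg SimpleGraph.Subgraph.verts hpq
    simp only [SimpleGraph.Subgraph.induce_verts] at h
    exact Finset.coe_injective h
  obtain ⟨i, e, g⟩ := p
  obtain ⟨i', e', g'⟩ := q
  obtain ⟨hp1, hpe⟩ := hp
  obtain ⟨hq1, hqe⟩ := hq
  have hii : i = i' := by
    by_contra hii
    obtain ⟨c₀, c₁, hc, he⟩ := Finset.card_eq_two.1 hqe
    have hm0 : (⟨i', c₀⟩ : Σ i : Fin r, Fin (n i)) ∈ T i0 x y ⟨i, (e, g)⟩ := by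
      rw [hT]; exact mem_T.2 (Or.inr (Or.inr (Or.inl ⟨c₀, by rw [he]; simp, rfl⟩)))
    have hm1 : (⟨i', c₁⟩ : Σ i : Fin r, Fin (n i)) ∈ T i0 x y ⟨i, (e, g)⟩ := by
      rw [hT]; exact mem_T.2 (Or.inr (Or.inr (Or.inl ⟨c₁, by rw [he]; simp, rfl⟩)))
    have hj : i' ∈ (univ.erase i0).erase i :=
      Finset.mem_erase.2 ⟨fun h => hii h.symm, Finset.mem_erase.2 ⟨hq1, Finset.mem_univ _⟩⟩
    have h0 := fst_other hm0 hj
    have h1 := fst_other hm1 hj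
    have e0 : c₀ = (⟨i, (e, g)⟩ : Par n i0).snd.2 i' hj := by simpa using h0
    have e1 : c₁ = (⟨i, (e, g)⟩ : Par n i0).snd.2 i' hj := by simpa using h1
    exact hc (e0.trans e1.symm)
  subst hii
  have hee : e = e' := by
    ext c
    constructor
    · intro hc
      exact mem_pi_of_mem_T hq1 (hT ▸ mem_T.2 (Or.inr (Or.inr (Or.inl ⟨c, hc, rfl⟩))))
    · intro hc
      exact mem_pi_of_mem_T hp1 (hT.symm ▸ mem_T.2 (Or.inr (Or.inr (Or.inl ⟨c, hc, rfl⟩))))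
  subst hee
  have hgg : g = g' := by
    funext j hj
    have hm : (⟨j, g j hj⟩ : Σ i : Fin r, Fin (n i)) ∈ T i0 x y ⟨i, (e, g')⟩ := by
      rw [← hT]; exact mem_T.2 (Or.inr (Or.inr (Or.inr ⟨j, hj, rfl⟩)))
    have := fst_other hm hj
    simpa using this
  rw [hgg]

lemma sigma_cast {v : Σ i : Fin r, Fin (n i)} {j : Fin r} (h : v.1 = j) :
    v = ⟨j, Fin.cast (congrArg n h) v.2⟩ := by
  obtain ⟨j', c⟩ := v
  cases h
  rfl

lemma classify {H : SimpleGraph (Σ i : Fin r, Fin (n i))}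
    (hH : H = SimpleGraph.completeMultipartiteGraph (fun i => Fin (n i)) ⊔
      SimpleGraph.fromEdgeSet {s((⟨i0, x⟩ : Σ i : Fin r, Fin (n i)), ⟨i0, y⟩)})
    (hr : 2 ≤ r) (hxy : x ≠ y) (H' : H.Subgraph)
    (hiso : Nonempty (H'.coe ≃g cliqueMinusEdge r)) :
    ∃ p ∈ P n i0, H' = (⊤ : H.Subgraph).induce ↑(T i0 x y p) := by
  obtain ⟨φ⟩ := hiso
  let ψ := φ.symm
  let w : Fin (r + 2) → Σ i : Fin r, Fin (n i) := fun z => ↑(ψ z)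
  have hwinj : Function.Injective w := Subtype.coe_injective.comp ψ.toEquiv.injective
  have h01 : (0 : Fin (r + 2)) ≠ 1 := by simp [Fin.ext_iff]
  have hadj : ∀ z z', H'.Adj (w z) (w z') ↔ z ≠ z' ∧ s(z, z') ≠ s(0, 1) := by
    intro z z'
    have h := ψ.map_adj_iff (v := z) (w := z')
    rw [SimpleGraph.Subgraph.coe_adj] at h
    exact h.trans cliqueMinusEdge_adj
  have hverts : H'.verts = Set.range w := by
    ext v
    constructor
    · intro hv
      exact ⟨ψ.toEquiv.symm ⟨v, hv⟩, congrArg Subtype.val (ψ.toEquiv.apply_symm_apply ⟨v, hv⟩)⟩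
    · rintro ⟨z, rfl⟩
      exact (ψ z).2
  have hab : (⟨i0, x⟩ : Σ i : Fin r, Fin (n i)) ≠ ⟨i0, y⟩ := by simp [hxy]
  have hW : ∀ z z', z ≠ z' → s(z, z') ≠ s(0, 1) → H.Adj (w z) (w z') :=
    fun z z' h1 h2 => H'.adj_sub ((hadj z z').2 ⟨h1, h2⟩)
  have hcol : ∀ z z', z ≠ z' → (w z).1 = (w z').1 →
      s(z, z') = s(0, 1) ∨ s(w z, w z') =
        s((⟨i0, x⟩ : Σ i : Fin r, Fin (n i)), ⟨i0, y⟩) := by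
    intro z z' h1 h2
    by_cases hs : s(z, z') = s(0, 1)
    · exact Or.inl hs
    · have h := hW z z' h1 hs
      rw [hH] at h
      rcases h with h | h
      · exact absurd h2 h
      · exact Or.inr (by simpa using h.1)
  have htrick : ∀ (z₁ z₂ : Fin (r + 2)), z₁ ≠ z₂ →
      ¬(∀ z z', z ≠ z' → (w z).1 = (w z').1 → s(z, z') = s(z₁, z₂)) := by
    intro z₁ z₂ hz hcoll
    have hinj : Set.InjOn (fun z => (w z).1) ↑(univ.erase z₂ : Finset (Fin (r + 2))) := by
      intro u hu v hv huv
      by_contra hne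
      rcases Sym2.eq_iff.1 (hcoll u v hne huv) with ⟨rfl, rfl⟩ | ⟨rfl, rfl⟩
      · exact (Finset.mem_erase.1 (Finset.mem_coe.1 hv)).1 rfl
      · exact (Finset.mem_erase.1 (Finset.mem_coe.1 hu)).1 rfl
    have h1 : (univ.erase z₂ : Finset (Fin (r + 2))).card = r + 1 := by
      rw [Finset.card_erase_of_mem (Finset.mem_univ _), Finset.card_univ, Fintype.card_fin]
      omega
    have h2 := Finset.card_image_of_injOn hinj
    have h3 : ((univ.erase z₂).image fun z => (w z).1).card ≤ r := by
      refine le_trans (Finset.card_le_card (Finset.subset_univ _)) ?_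
      simp
    omega
  have hα : ∃ α, w α = ⟨i0, x⟩ := by
    by_contra hna
    push_neg at hna
    refine htrick 0 1 h01 fun z z' h1 h2 => ?_
    rcases hcol z z' h1 h2 with h | h
    · exact h
    · exfalso
      rcases Sym2.eq_iff.1 h with ⟨h', _⟩ | ⟨_, h'⟩
      · exact hna z h'
      · exact hna z' h'
  have hβ : ∃ β, w β = ⟨i0, y⟩ := by
    by_contra hnb
    push_neg at hnb
    refine htrick 0 1 h01 fun z z' h1 h2 => ?_
    rcases hcol z z' h1 h2 with h | h
    · exact h
    · exfalso
      rcases Sym2.eq_iff.1 h with ⟨_, h'⟩ | ⟨h', _⟩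
      · exact hnb z' h'
      · exact hnb z h'
  obtain ⟨α, hwα⟩ := hα
  obtain ⟨β, hwβ⟩ := hβ
  have hαβ : α ≠ β := fun h => hab (by rw [← hwα, h, hwβ])
  have hba : ∀ z z', s(w z, w z') = s((⟨i0, x⟩ : Σ i : Fin r, Fin (n i)), ⟨i0, y⟩) →
      s(z, z') = s(α, β) := by
    intro z z' hh
    rcases Sym2.eq_iff.1 hh with ⟨h3, h4⟩ | ⟨h3, h4⟩
    · obtain rfl : z = α := hwinj (by rw [h3, hwα])
      obtain rfl : z' = β := hwinj (by rw [h4, hwβ])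
      rfl
    · obtain rfl : z = β := hwinj (by rw [h3, hwβ])
      obtain rfl : z' = α := hwinj (by rw [h4, hwα])
      exact Sym2.eq_swap
  have hcol2 : ∀ z z', z ≠ z' → (w z).1 = (w z').1 →
      s(z, z') = s(0, 1) ∨ s(z, z') = s(α, β) := by
    intro z z' h1 h2
    rcases hcol z z' h1 h2 with h | h
    · exact Or.inl h
    · exact Or.inr (hba z z' h)
  have hs' : s(α, β) ≠ s(0, 1) := by
    intro h
    refine htrick 0 1 h01 fun z z' h1 h2 => ?_
    rcases hcol2 z z' h1 h2 with hh | hh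
    · exact hh
    · exact hh.trans h
  have h01w : (w 0).1 = (w 1).1 := by
    by_contra h
    refine htrick α β hαβ fun z z' h1 h2 => ?_
    rcases hcol2 z z' h1 h2 with hh | hh
    · exfalso
      rcases Sym2.eq_iff.1 hh with ⟨rfl, rfl⟩ | ⟨rfl, rfl⟩
      · exact h h2
      · exact h h2.symm
    · exact hh
  have hfib3 : ∀ z₁ z₂ z₃ : Fin (r + 2), z₁ ≠ z₂ → z₁ ≠ z₃ → z₂ ≠ z₃ →
      (w z₁).1 = (w z₂).1 → (w z₁).1 = (w z₃).1 → False := by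
    intro z₁ z₂ z₃ h12 h13 h23 e12 e13
    have p12 := hcol2 z₁ z₂ h12 e12
    have p13 := hcol2 z₁ z₃ h13 e13
    have p23 := hcol2 z₂ z₃ h23 (e12.symm.trans e13)
    have dd : ∀ {A : Sym2 (Fin (r + 2))}, s(z₁, z₂) = A → s(z₁, z₃) = A → False := by
      intro A hA hB
      rcases Sym2.eq_iff.1 (hA.trans hB.symm) with ⟨_, h⟩ | ⟨h, _⟩
      · exact h23 h
      · exact h13 h
    have dd2 : ∀ {A : Sym2 (Fin (r + 2))}, s(z₁, z₂) = A → s(z₂, z₃) = A → False := by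
      intro A hA hB
      rcases Sym2.eq_iff.1 (hA.trans hB.symm) with ⟨h, _⟩ | ⟨h, _⟩
      · exact h12 h
      · exact h13 h
    have dd3 : ∀ {A : Sym2 (Fin (r + 2))}, s(z₁, z₃) = A → s(z₂, z₃) = A → False := by
      intro A hA hB
      rcases Sym2.eq_iff.1 (hA.trans hB.symm) with ⟨h, _⟩ | ⟨h, _⟩
      · exact h12 h
      · exact h13 h
    rcases p12 with h | h <;> rcases p13 with h' | h' <;> rcases p23 with h'' | h''
    · exact dd h h'
    · exact dd h h'
    · exact dd2 h h''
    · exact dd3 h' h''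
    · exact dd3 h' h''
    · exact dd2 h h''
    · exact dd h h'
    · exact dd h h'
  have hfi : ∀ z, (w z).1 = (w 0).1 → z = 0 ∨ z = 1 := by
    intro z hz
    by_contra h
    push_neg at h
    exact hfib3 z 0 1 h.1 h.2 h01 hz (hz.trans h01w)
  have hfi0 : ∀ z, (w z).1 = i0 → z = α ∨ z = β := by
    intro z hz
    by_contra h
    push_neg at h
    have hzα : (w z).1 = (w α).1 := by rw [hz, hwα]
    have hzβ : (w z).1 = (w β).1 := by rw [hz, hwβ]
    exact hfib3 z α β h.1 h.2 hαβ hzα hzβ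
  have hii0 : (w 0).1 ≠ i0 := by
    intro h
    rcases hfi0 0 h with h0 | h0 <;> rcases hfi0 1 (h01w.symm.trans h) with h1 | h1
    · exact h01 (h0.trans h1.symm)
    · exact hs' (by rw [← h0, ← h1])
    · exact hs' (by rw [← h0, ← h1]; exact Sym2.eq_swap)
    · exact h01 (h0.trans h1.symm)
  have hsurj : ∀ j : Fin r, ∃ z, (w z).1 = j := by
    by_contra hns
    push_neg at hns
    obtain ⟨j₀, hj₀⟩ := hns
    have hinj : Set.InjOn (fun z => (w z).1) ↑((univ.erase 1).erase β : Finset (Fin (r + 2))) := by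
      intro u hu v hv huv
      by_contra hne
      rcases hcol2 u v hne huv with h | h
      · rcases Sym2.eq_iff.1 h with ⟨rfl, rfl⟩ | ⟨rfl, rfl⟩
        · exact (Finset.mem_erase.1 (Finset.mem_erase.1 (Finset.mem_coe.1 hv)).2).1 rfl
        · exact (Finset.mem_erase.1 (Finset.mem_erase.1 (Finset.mem_coe.1 hu)).2).1 rfl
      · rcases Sym2.eq_iff.1 h with ⟨rfl, rfl⟩ | ⟨rfl, rfl⟩
        · exact (Finset.mem_erase.1 (Finset.mem_coe.1 hv)).1 rfl
        · exact (Finset.mem_erase.1 (Finset.mem_coe.1 hu)).1 rfl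
    have hsub : ((univ.erase 1).erase β).image (fun z => (w z).1) ⊆ univ.erase j₀ := by
      intro j hj
      obtain ⟨z, _, rfl⟩ := Finset.mem_image.1 hj
      exact Finset.mem_erase.2 ⟨hj₀ z, Finset.mem_univ _⟩
    have h2 := Finset.card_image_of_injOn hinj
    have h3 := Finset.card_le_card hsub
    have h4 : ((univ.erase 1 : Finset (Fin (r + 2))).erase β).card ≥ r := by
      have := Finset.card_erase_of_mem (Finset.mem_univ (1 : Fin (r + 2)))
      have h5 := Finset.pred_card_le_card_erase (s := univ.erase 1) (a := β)
      rw [this, Finset.card_univ, Fintype.card_fin] at h5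
      omega
    have h6 : (univ.erase j₀ : Finset (Fin r)).card = r - 1 := by
      rw [Finset.card_erase_of_mem (Finset.mem_univ _), Finset.card_univ, Fintype.card_fin]
    omega
  choose q hq using hsurj
  have hne01 : (w 0).2 ≠ Fin.cast (congrArg n h01w.symm) ((w 1).2) := by
    intro h
    apply h01
    apply hwinj
    have e1 : w 1 = ⟨(w 0).1, Fin.cast (congrArg n h01w.symm) ((w 1).2)⟩ :=
      sigma_cast h01w.symm
    rw [e1, ← h]
  set pp : Par n i0 := ⟨(w 0).1, ({(w 0).2, Fin.cast (congrArg n h01w.symm) ((w 1).2)},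
    fun j _ => Fin.cast (congrArg n (hq j)) ((w (q j)).2))⟩ with hpp
  have hppP : pp ∈ P n i0 := mem_P.2 ⟨hii0, Finset.card_pair hne01⟩
  have hqz : ∀ z (hj : (w z).1 ∈ (univ.erase i0).erase pp.1), q ((w z).1) = z := by
    intro z hj
    by_contra hne
    have hfst : (w (q ((w z).1))).1 = (w z).1 := hq _
    rcases hcol2 _ z hne hfst with h | h
    · rcases Sym2.eq_iff.1 h with ⟨h1, h2⟩ | ⟨h1, h2⟩
      · subst h2
        exact (Finset.mem_erase.1 hj).1 h01w.symm
      · subst h2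
        exact (Finset.mem_erase.1 hj).1 rfl
    · rcases Sym2.eq_iff.1 h with ⟨h1, h2⟩ | ⟨h1, h2⟩
      · subst h2
        exact (Finset.mem_erase.1 (Finset.mem_erase.1 hj).2).1 (by rw [hwβ])
      · subst h2
        exact (Finset.mem_erase.1 (Finset.mem_erase.1 hj).2).1 (by rw [hwα])
  have hrange : (↑(T i0 x y pp) : Set (Σ i : Fin r, Fin (n i))) = Set.range w := by
    ext v
    simp only [Finset.mem_coe, Set.mem_range]
    constructor
    · intro hv
      rcases mem_T.1 hv with h | h | ⟨c, hc, h⟩ | ⟨j, hj, h⟩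
      · exact ⟨α, hwα.trans h.symm⟩
      · exact ⟨β, hwβ.trans h.symm⟩
      · rcases Finset.mem_insert.1 hc with rfl | hc
        · exact ⟨0, by rw [h]⟩
        · rw [Finset.mem_singleton] at hc
          subst hc
          exact ⟨1, by rw [h]; exact sigma_cast h01w.symm⟩
      · exact ⟨q j, by rw [h]; exact sigma_cast (hq j)⟩
    · rintro ⟨z, rfl⟩
      by_cases hz0 : (w z).1 = i0
      · rcases hfi0 z hz0 with rfl | rfl
        · exact mem_T.2 (Or.inl hwα)
        · exact mem_T.2 (Or.inr (Or.inl hwβ))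
      by_cases hzi : (w z).1 = (w 0).1
      · rcases hfi z hzi with rfl | rfl
        · exact mem_T.2 (Or.inr (Or.inr (Or.inl
            ⟨(w 0).2, Finset.mem_insert_self _ _, (Sigma.eta (w 0)).symm⟩)))
        · exact mem_T.2 (Or.inr (Or.inr (Or.inl
            ⟨Fin.cast (congrArg n h01w.symm) ((w 1).2), Finset.mem_insert_of_mem (Finset.mem_singleton_self _), sigma_cast h01w.symm⟩)))
      · have hj : (w z).1 ∈ (univ.erase i0).erase pp.1 :=
          Finset.mem_erase.2 ⟨hzi, Finset.mem_erase.2 ⟨hz0, Finset.mem_univ _⟩⟩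
        refine mem_T.2 (Or.inr (Or.inr (Or.inr ⟨(w z).1, hj, ?_⟩)))
        exact (congrArg w (hqz z hj)).symm.trans (sigma_cast (hq ((w z).1)))
  refine ⟨pp, hppP, SimpleGraph.Subgraph.ext ?_ ?_⟩
  · rw [SimpleGraph.Subgraph.induce_verts]
    exact hverts.trans hrange.symm
  · funext u v
    rw [SimpleGraph.Subgraph.induce_adj, eq_iff_iff]
    constructor
    · intro h
      refine ⟨?_, ?_, SimpleGraph.Subgraph.top_adj.2 (H'.adj_sub h)⟩
      · have h2 := H'.edge_vert h
        rw [hverts, ← hrange] at h2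
        exact h2
      · have h2 := H'.edge_vert h.symm
        rw [hverts, ← hrange] at h2
        exact h2
    · rintro ⟨hu, hv, hadjH⟩
      rw [hrange] at hu hv
      obtain ⟨z, rfl⟩ := hu
      obtain ⟨z', rfl⟩ := hv
      have hHadj : H.Adj (w z) (w z') := SimpleGraph.Subgraph.top_adj.1 hadjH
      have hne : z ≠ z' := fun hzz => hHadj.ne (by rw [hzz])
      refine (hadj z z').2 ⟨hne, fun hs01 => ?_⟩
      rw [hH] at hHadj
      rcases Sym2.eq_iff.1 hs01 with ⟨rfl, rfl⟩ | ⟨rfl, rfl⟩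
      · rcases hHadj with h | h
        · exact h h01w
        · exact hs' (hba 0 1 (by simpa using h.1)).symm
      · rcases hHadj with h | h
        · exact h h01w.symm
        · exact hs' ((hba 1 0 (by simpa using h.1)).symm.trans Sym2.eq_swap)

end Structure

end TuranPlusAux

/-- For `r ≥ 2` and `F = K_{r+2} − e`, the number of copies of `F` in the graph obtained
from the complete `r`-partite graph with parts of sizes `n 0, …, n (r-1)` by adding one
edge inside the first part equals `∑_{i≠0} C(n i, 2) · ∏_{j≠0, j≠i} n j`. -/
theorem copies_cliqueMinusEdge_turanPlus (r : ℕ) (hr : 2 ≤ r) (n : Fin r → ℕ)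
    (i0 : Fin r) (hi0 : (i0 : ℕ) = 0)
    (x y : Fin (n i0)) (hxy : x ≠ y)
    (H : SimpleGraph (Σ i : Fin r, Fin (n i)))
    (hH : H = SimpleGraph.completeMultipartiteGraph (fun i => Fin (n i)) ⊔
      SimpleGraph.fromEdgeSet {s((⟨i0, x⟩ : Σ i : Fin r, Fin (n i)), ⟨i0, y⟩)}) :
    copyCount (cliqueMinusEdge r) H =
      ∑ i ∈ univ.erase i0,
        (n i).choose 2 * ∏ j ∈ (univ.erase i0).erase i, n j := by
  classical
  rw [copyCount]
  have hset : {H' : H.Subgraph | Nonempty (H'.coe ≃g cliqueMinusEdge r)} =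
      (fun p => (⊤ : H.Subgraph).induce ↑(TuranPlusAux.T i0 x y p)) ''
        ↑(TuranPlusAux.P n i0) := by
    ext H'
    constructor
    · intro h
      obtain ⟨p, hp, hEq⟩ := TuranPlusAux.classify hH hr hxy H' h
      exact ⟨p, Finset.mem_coe.2 hp, hEq.symm⟩
    · rintro ⟨p, hp, rfl⟩
      exact TuranPlusAux.iso_of_mem hH hr hxy (Finset.mem_coe.1 hp)
  rw [hset, Set.ncard_image_of_injOn TuranPlusAux.inj_on_P, Set.ncard_coe_finset,
    TuranPlusAux.card_P]
end

section
/- For s, t ≥ 2 and F = K_{s,t}⁺ (the complete bipartite graph K_{s,t} with one extra edge added inside the part of size s), the number of copies of F in the graph obtained from the complete bipartite graph with parts of sizes n₁ and n₂ by adding one edge inside the first part equals C(n₂, t) · C(n₁ − 2, s − 2). -/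
/-- `K_{s,t}⁺`: the complete bipartite graph `K_{s,t}` with one extra edge added
inside the part of size `s`. -/
def Kst_plus (s t : ℕ) (a b : Fin s) : SimpleGraph (Fin s ⊕ Fin t) :=
  completeBipartiteGraph (Fin s) (Fin t) ⊔
    SimpleGraph.fromEdgeSet {s(Sum.inl a, Sum.inl b)}

namespace KstPlusProof

open SimpleGraph Sum

variable {α β : Type*}

abbrev GP (α β : Type*) (a b : α) : SimpleGraph (α ⊕ β) :=
  completeBipartiteGraph α β ⊔ SimpleGraph.fromEdgeSet {s(Sum.inl a, Sum.inl b)}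

lemma gp_adj_ll {a b : α} (u v : α) :
    (GP α β a b).Adj (inl u) (inl v) ↔ ((u = a ∧ v = b) ∨ (u = b ∧ v = a)) ∧ u ≠ v := by
  simp [completeBipartiteGraph, Sym2.eq_iff]

lemma gp_adj_lr {a b : α} (u : α) (w : β) : (GP α β a b).Adj (inl u) (inr w) := by
  simp [completeBipartiteGraph]

lemma gp_adj_rl {a b : α} (u : α) (w : β) : (GP α β a b).Adj (inr w) (inl u) := by
  simp [completeBipartiteGraph]

lemma gp_adj_rr {a b : α} (w w' : β) : ¬ (GP α β a b).Adj (inr w) (inr w') := by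
  simp [completeBipartiteGraph]

lemma gp_key {a b : α} (hab : a ≠ b) {u v1 v2 : α}
    (h1 : (GP α β a b).Adj (inl u) (inl v1)) (h2 : (GP α β a b).Adj (inl u) (inl v2)) :
    v1 = v2 := by
  rw [gp_adj_ll] at h1 h2
  rcases h1 with ⟨⟨rfl, rfl⟩ | ⟨rfl, rfl⟩, -⟩ <;> rcases h2 with ⟨h | h, -⟩ <;> tauto

lemma gp_right {a b : α} {w : β} {z : α ⊕ β} (h : (GP α β a b).Adj (inr w) z) :
    ∃ u, z = inl u := by
  cases z with
  | inl u => exact ⟨u, rfl⟩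
  | inr w' => exact absurd h (gp_adj_rr _ _)


lemma exists_equiv_two {κ γ : Type*} (f : κ ≃ γ) {a b : κ} (hab : a ≠ b) {x y : γ}
    (hxy : x ≠ y) : ∃ g : κ ≃ γ, g a = x ∧ g b = y := by
  classical
  set g1 : κ ≃ γ := (Equiv.swap a (f.symm x)).trans f with hg1
  have hg1a : g1 a = x := by simp [hg1]
  refine ⟨(Equiv.swap b (g1.symm y)).trans g1, ?_, ?_⟩
  · show g1 (Equiv.swap b (g1.symm y) a) = x
    rw [Equiv.swap_apply_of_ne_of_ne hab, hg1a]
    intro h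
    apply hxy
    rw [← hg1a, h, Equiv.apply_symm_apply]
  · simp


section Forward
variable {s t n₁ n₂ : ℕ}

lemma forward_struct (hs : 2 ≤ s) (ht : 2 ≤ t) (a b : Fin s) (hab : a ≠ b)
    (x y : Fin n₁) (hxy : x ≠ y)
    (H' : (GP (Fin n₁) (Fin n₂) x y).Subgraph)
    (e : H'.coe ≃g Kst_plus s t a b) :
    ∃ (S : Finset (Fin n₁)) (T : Finset (Fin n₂)), x ∈ S ∧ y ∈ S ∧ S.card = s ∧ T.card = t ∧
      H' = (⊤ : (GP (Fin n₁) (Fin n₂) x y).Subgraph).induce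
        (inl '' (S : Set (Fin n₁)) ∪ inr '' (T : Set (Fin n₂))) := by
  classical
  set F := Kst_plus s t a b with hF
  set P : Fin s ⊕ Fin t → Fin n₁ ⊕ Fin n₂ := fun z => ((e.symm z : H'.verts) : Fin n₁ ⊕ Fin n₂)
    with hPdef
  have hPinj : Function.Injective P := by
    intro z w h
    exact e.symm.injective (Subtype.ext h)
  have hPmem : ∀ z, P z ∈ H'.verts := fun z => (e.symm z).2
  have hPadj : ∀ z w, H'.Adj (P z) (P w) ↔ F.Adj z w := by
    intro z w
    rw [← Subgraph.coe_adj]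
    constructor
    · intro h
      exact (e.symm.map_adj_iff (v := z) (w := w)).mp (by exact_mod_cast h)
    · intro h
      exact_mod_cast (e.symm.map_adj_iff (v := z) (w := w)).mpr h
  have hFll : ∀ i j : Fin s, F.Adj (inl i) (inl j) ↔ ((i = a ∧ j = b) ∨ (i = b ∧ j = a)) ∧ i ≠ j :=
    fun i j => gp_adj_ll i j
  have hFlr : ∀ (i : Fin s) (j : Fin t), F.Adj (inl i) (inr j) := fun i j => gp_adj_lr i j
  have hFrl : ∀ (i : Fin s) (j : Fin t), F.Adj (inr j) (inl i) := fun i j => gp_adj_rl i j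
  have hadjab : H'.Adj (P (inl a)) (P (inl b)) :=
    (hPadj _ _).mpr ((hFll a b).mpr ⟨Or.inl ⟨rfl, rfl⟩, hab⟩)
  have j0 : Fin t := ⟨0, by omega⟩
  -- Step 1 : all right vertices of F map to right host vertices
  have step1 : ∀ j : Fin t, ∃ w, P (inr j) = inr w := by
    intro j
    by_contra hcon
    push_neg at hcon
    obtain ⟨w, hw⟩ : ∃ w, P (inr j) = inl w := by
      cases hq : P (inr j) with
      | inl u => exact ⟨u, rfl⟩
      | inr u => exact absurd hq (hcon u)
    have hOne : ∀ (i1 i2 : Fin s) (u1 u2 : Fin n₁),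
        P (inl i1) = inl u1 → P (inl i2) = inl u2 → i1 = i2 := by
      intro i1 i2 u1 u2 h1 h2
      have a1 : H'.Adj (P (inr j)) (P (inl i1)) := (hPadj _ _).mpr (hFrl _ _)
      have a2 : H'.Adj (P (inr j)) (P (inl i2)) := (hPadj _ _).mpr (hFrl _ _)
      rw [hw, h1] at a1
      rw [hw, h2] at a2
      have : u1 = u2 := gp_key hxy (H'.adj_sub a1) (H'.adj_sub a2)
      subst this
      exact inl_injective (hPinj (h1.trans h2.symm))
    obtain ⟨i0, u0, hi0⟩ : ∃ (i0 : Fin s) (u0 : Fin n₂), P (inl i0) = inr u0 := by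
      by_contra hc
      push_neg at hc
      have ha' : ∃ u, P (inl a) = inl u := by
        cases hq : P (inl a) with
        | inl u => exact ⟨u, rfl⟩
        | inr u => exact absurd hq (hc a u)
      have hb' : ∃ u, P (inl b) = inl u := by
        cases hq : P (inl b) with
        | inl u => exact ⟨u, rfl⟩
        | inr u => exact absurd hq (hc b u)
      obtain ⟨ua, hua⟩ := ha'
      obtain ⟨ub, hub⟩ := hb'
      exact hab (hOne a b ua ub hua hub)
    have hAllL : ∀ j' : Fin t, ∃ w', P (inr j') = inl w' := by
      intro j'
      have h1 : H'.Adj (P (inl i0)) (P (inr j')) := (hPadj _ _).mpr (hFlr _ _)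
      have h2 := H'.adj_sub h1
      rw [hi0] at h2
      exact gp_right h2
    obtain ⟨c, q, hc⟩ : ∃ (c : Fin s) (q : Fin n₁), P (inl c) = inl q := by
      cases hqa : P (inl a) with
      | inl q => exact ⟨a, q, hqa⟩
      | inr q =>
        cases hqb : P (inl b) with
        | inl q' => exact ⟨b, q', hqb⟩
        | inr q' =>
          have h2 := H'.adj_sub hadjab
          rw [hqa, hqb] at h2
          exact absurd h2 (gp_adj_rr _ _)
    obtain ⟨w1, hw1⟩ := hAllL ⟨0, by omega⟩
    obtain ⟨w2, hw2⟩ := hAllL ⟨1, by omega⟩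
    have A1 : H'.Adj (P (inl c)) (P (inr ⟨0, by omega⟩)) := (hPadj _ _).mpr (hFlr _ _)
    have A2 : H'.Adj (P (inl c)) (P (inr ⟨1, by omega⟩)) := (hPadj _ _).mpr (hFlr _ _)
    have B1 := H'.adj_sub A1
    have B2 := H'.adj_sub A2
    rw [hc, hw1] at B1
    rw [hc, hw2] at B2
    have : w1 = w2 := gp_key hxy B1 B2
    subst this
    have : (inr ⟨0, by omega⟩ : Fin s ⊕ Fin t) = inr ⟨1, by omega⟩ :=
      hPinj (hw1.trans hw2.symm)
    simp at this
  -- Step 2 : all left vertices of F map to left host vertices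
  have step2 : ∀ i : Fin s, ∃ u, P (inl i) = inl u := by
    intro i
    cases hq : P (inl i) with
    | inl u => exact ⟨u, rfl⟩
    | inr u =>
      obtain ⟨w0, hw0⟩ := step1 ⟨0, by omega⟩
      have h1 : H'.Adj (P (inl i)) (P (inr ⟨0, by omega⟩)) := (hPadj _ _).mpr (hFlr _ _)
      have h2 := H'.adj_sub h1
      rw [hq, hw0] at h2
      exact absurd h2 (gp_adj_rr _ _)
  choose fL hfL using step2
  choose fR hfR using step1
  have hfLinj : Function.Injective fL := by
    intro i j h
    exact inl_injective (hPinj ((hfL i).trans (by rw [h, ← hfL])))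
  have hfRinj : Function.Injective fR := by
    intro i j h
    exact inr_injective (hPinj ((hfR i).trans (by rw [h, ← hfR])))
  set S : Finset (Fin n₁) := Finset.image fL Finset.univ with hS
  set T : Finset (Fin n₂) := Finset.image fR Finset.univ with hT
  have hScard : S.card = s := by
    rw [hS, Finset.card_image_of_injective _ hfLinj]; simp
  have hTcard : T.card = t := by
    rw [hT, Finset.card_image_of_injective _ hfRinj]; simp
  have habhost : (fL a = x ∧ fL b = y) ∨ (fL a = y ∧ fL b = x) := by
    have h2 := H'.adj_sub hadjab
    rw [hfL, hfL] at h2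
    exact ((gp_adj_ll _ _).mp h2).1
  have hxS : x ∈ S ∧ y ∈ S := by
    rcases habhost with ⟨h1, h2⟩ | ⟨h1, h2⟩
    · exact ⟨h1 ▸ Finset.mem_image_of_mem fL (Finset.mem_univ a),
        h2 ▸ Finset.mem_image_of_mem fL (Finset.mem_univ b)⟩
    · exact ⟨h2 ▸ Finset.mem_image_of_mem fL (Finset.mem_univ b),
        h1 ▸ Finset.mem_image_of_mem fL (Finset.mem_univ a)⟩
  have hverts : H'.verts = inl '' (S : Set (Fin n₁)) ∪ inr '' (T : Set (Fin n₂)) := by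
    ext v
    constructor
    · intro hv
      have hPv : P (e ⟨v, hv⟩) = v := by
        simp [hPdef]
      cases hz : e ⟨v, hv⟩ with
      | inl i =>
        left
        refine ⟨fL i, by simp [hS], ?_⟩
        rw [← hPv, hz, hfL]
      | inr jj =>
        right
        refine ⟨fR jj, by simp [hT], ?_⟩
        rw [← hPv, hz, hfR]
    · rintro (⟨u, hu, rfl⟩ | ⟨w, hw, rfl⟩)
      · simp only [hS, Finset.coe_image, Finset.coe_univ, Set.image_univ,
          Set.mem_range] at hu
        obtain ⟨i, rfl⟩ := hu
        rw [← hfL]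
        exact hPmem _
      · simp only [hT, Finset.coe_image, Finset.coe_univ, Set.image_univ,
          Set.mem_range] at hw
        obtain ⟨jj, rfl⟩ := hw
        rw [← hfR]
        exact hPmem _
  refine ⟨S, T, hxS.1, hxS.2, hScard, hTcard, ?_⟩
  apply Subgraph.ext
  · simpa using hverts
  · ext u v
    simp only [Subgraph.induce_adj, Subgraph.top_adj]
    constructor
    · intro h
      exact ⟨hverts ▸ H'.edge_vert h, hverts ▸ H'.edge_vert h.symm, H'.adj_sub h⟩
    · rintro ⟨hu, hv, hadj⟩
      rw [← hverts] at hu hv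
      have h1 : P (e ⟨u, hu⟩) = u := by simp [hPdef]
      have h2 : P (e ⟨v, hv⟩) = v := by simp [hPdef]
      rw [← h1, ← h2] at hadj ⊢
      rw [hPadj]
      cases hz1 : e ⟨u, hu⟩ with
      | inl i =>
        cases hz2 : e ⟨v, hv⟩ with
        | inl i' =>
          rw [hz1, hz2] at hadj
          rw [hfL, hfL] at hadj
          have hli := ((gp_adj_ll _ _).mp hadj).1
          refine (hFll i i').mpr ⟨?_, ?_⟩
          · rcases hli with ⟨e1, e2⟩ | ⟨e1, e2⟩ <;> rcases habhost with ⟨f1, f2⟩ | ⟨f1, f2⟩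
            · exact Or.inl ⟨hfLinj (e1.trans f1.symm), hfLinj (e2.trans f2.symm)⟩
            · exact Or.inr ⟨hfLinj (e1.trans f2.symm), hfLinj (e2.trans f1.symm)⟩
            · exact Or.inr ⟨hfLinj (e1.trans f2.symm), hfLinj (e2.trans f1.symm)⟩
            · exact Or.inl ⟨hfLinj (e1.trans f1.symm), hfLinj (e2.trans f2.symm)⟩
          · intro hii
            rw [hii] at hadj
            exact hadj.ne rfl
        | inr j' =>
          exact hFlr _ _
      | inr jj =>
        cases hz2 : e ⟨v, hv⟩ with
        | inl i' => exact hFrl _ _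
        | inr j' =>
          rw [hz1, hz2, hfR, hfR] at hadj
          exact absurd hadj (gp_adj_rr _ _)

end Forward

section Backward
variable {s t n₁ n₂ : ℕ}

/-- vertex equivalence for the standard subgraph -/
def vertEquiv (S : Finset (Fin n₁)) (T : Finset (Fin n₂)) :
    ↥(inl '' (S : Set (Fin n₁)) ∪ inr '' (T : Set (Fin n₂))) ≃ {u // u ∈ S} ⊕ {w // w ∈ T} where
  toFun v :=
    match v with
    | ⟨.inl u, h⟩ => .inl ⟨u, by simpa using h⟩
    | ⟨.inr w, h⟩ => .inr ⟨w, by simpa using h⟩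
  invFun z :=
    match z with
    | .inl ⟨u, h⟩ => ⟨.inl u, Set.mem_union_left _ ⟨u, h, rfl⟩⟩
    | .inr ⟨w, h⟩ => ⟨.inr w, Set.mem_union_right _ ⟨w, h, rfl⟩⟩
  left_inv v := by rcases v with ⟨u | w, h⟩ <;> rfl
  right_inv z := by rcases z with ⟨u, h⟩ | ⟨w, h⟩ <;> rfl

lemma backward_iso (hs : 2 ≤ s) (ht : 2 ≤ t) (a b : Fin s) (hab : a ≠ b)
    (x y : Fin n₁) (hxy : x ≠ y)
    (S : Finset (Fin n₁)) (T : Finset (Fin n₂))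
    (hxS : x ∈ S) (hyS : y ∈ S) (hScard : S.card = s) (hTcard : T.card = t) :
    Nonempty (((⊤ : (GP (Fin n₁) (Fin n₂) x y).Subgraph).induce
      (inl '' (S : Set (Fin n₁)) ∪ inr '' (T : Set (Fin n₂)))).coe ≃g Kst_plus s t a b) := by
  classical
  obtain ⟨g2, hg2a, hg2b⟩ :=
    exists_equiv_two ((Finset.equivFinOfCardEq hScard).symm) hab
      (x := (⟨x, hxS⟩ : {u // u ∈ S})) (y := ⟨y, hyS⟩)
      (fun h => hxy (by injection h))
  obtain ⟨gT⟩ : Nonempty ({w // w ∈ T} ≃ Fin t) := ⟨Finset.equivFinOfCardEq hTcard⟩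
  refine ⟨⟨(vertEquiv S T).trans (Equiv.sumCongr g2.symm gT), ?_⟩⟩
  rintro ⟨u1 | w1, hu⟩ ⟨u2 | w2, hv⟩ <;>
    simp only [Equiv.trans_apply, Equiv.sumCongr_apply, vertEquiv, Equiv.coe_fn_mk,
      Sum.map_inl, Sum.map_inr, Subgraph.coe_adj, Subgraph.induce_adj, Subgraph.top_adj]
  · -- ll case
    change (Kst_plus s t a b).Adj (inl (g2.symm ⟨u1, by simpa using hu⟩))
      (inl (g2.symm ⟨u2, by simpa using hv⟩)) ↔ _
    rw [show (Kst_plus s t a b) = GP (Fin s) (Fin t) a b from rfl, gp_adj_ll, gp_adj_ll]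
    constructor
    · rintro ⟨h1 | h1, hne⟩
      · refine ⟨hu, hv, ?_, ?_⟩
        · left
          have e1 : (⟨u1, by simpa using hu⟩ : {u // u ∈ S}) = ⟨x, hxS⟩ := by
            rw [← hg2a, ← h1.1, Equiv.apply_symm_apply]
          have e2 : (⟨u2, by simpa using hv⟩ : {u // u ∈ S}) = ⟨y, hyS⟩ := by
            rw [← hg2b, ← h1.2, Equiv.apply_symm_apply]
          exact ⟨congrArg Subtype.val e1, congrArg Subtype.val e2⟩
        · intro h
          exact hne (by subst h; rfl)
      · refine ⟨hu, hv, ?_, ?_⟩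
        · right
          have e1 : (⟨u1, by simpa using hu⟩ : {u // u ∈ S}) = ⟨y, hyS⟩ := by
            rw [← hg2b, ← h1.1, Equiv.apply_symm_apply]
          have e2 : (⟨u2, by simpa using hv⟩ : {u // u ∈ S}) = ⟨x, hxS⟩ := by
            rw [← hg2a, ← h1.2, Equiv.apply_symm_apply]
          exact ⟨congrArg Subtype.val e1, congrArg Subtype.val e2⟩
        · intro h
          exact hne (by subst h; rfl)
    · rintro ⟨-, -, h1 | h1, hne⟩
      · refine ⟨Or.inl ⟨?_, ?_⟩, ?_⟩
        · rw [Equiv.symm_apply_eq, hg2a]; exact Subtype.ext h1.1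
        · rw [Equiv.symm_apply_eq, hg2b]; exact Subtype.ext h1.2
        · intro h
          exact hne (congrArg Subtype.val (g2.symm.injective h))
      · refine ⟨Or.inr ⟨?_, ?_⟩, ?_⟩
        · rw [Equiv.symm_apply_eq, hg2b]; exact Subtype.ext h1.1
        · rw [Equiv.symm_apply_eq, hg2a]; exact Subtype.ext h1.2
        · intro h
          exact hne (congrArg Subtype.val (g2.symm.injective h))
  · -- lr case
    exact ⟨fun _ => ⟨hu, hv, gp_adj_lr _ _⟩, fun _ => gp_adj_lr _ _⟩
  · -- rl case
    exact ⟨fun _ => ⟨hu, hv, gp_adj_rl _ _⟩, fun _ => gp_adj_rl _ _⟩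
  · -- rr case
    constructor
    · intro h
      exact absurd h (gp_adj_rr _ _)
    · rintro ⟨-, -, h⟩
      exact absurd h (gp_adj_rr _ _)

end Backward

lemma card_filter_pair_mem {n₁ s : ℕ} (hs : 2 ≤ s) (x y : Fin n₁) (hxy : x ≠ y) :
    (Finset.filter (fun S : Finset (Fin n₁) => x ∈ S ∧ y ∈ S ∧ S.card = s)
      Finset.univ).card = (n₁ - 2).choose (s - 2) := by
  classical
  have hkey :
      (Finset.filter (fun S : Finset (Fin n₁) => x ∈ S ∧ y ∈ S ∧ S.card = s)
        Finset.univ).card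
        = (Finset.powersetCard (s - 2) ((Finset.univ.erase x).erase y)).card := by
    refine Finset.card_bij' (fun S _ => (S.erase x).erase y)
      (fun R _ => insert x (insert y R)) ?_ ?_ ?_ ?_
    · intro S hS
      simp only [Finset.mem_filter] at hS
      obtain ⟨-, hxS, hyS, hcard⟩ := hS
      rw [Finset.mem_powersetCard]
      constructor
      · exact Finset.erase_subset_erase y (Finset.erase_subset_erase x (Finset.subset_univ S))
      · rw [Finset.card_erase_of_mem (Finset.mem_erase.mpr ⟨hxy.symm, hyS⟩),
          Finset.card_erase_of_mem hxS, hcard]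
        omega
    · intro R hR
      rw [Finset.mem_powersetCard] at hR
      obtain ⟨hsub, hcard⟩ := hR
      have hyR : y ∉ R := fun h => (Finset.mem_erase.mp (hsub h)).1 rfl
      have hxR : x ∉ R := fun h => (Finset.mem_erase.mp (Finset.mem_of_mem_erase (hsub h))).1 rfl
      have hxyR : x ∉ insert y R := by
        simp only [Finset.mem_insert]
        rintro (h | h)
        · exact hxy h
        · exact hxR h
      simp only [Finset.mem_filter, Finset.mem_univ, true_and]
      refine ⟨Finset.mem_insert_self _ _,
        Finset.mem_insert_of_mem (Finset.mem_insert_self _ _), ?_⟩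
      rw [Finset.card_insert_of_notMem hxyR, Finset.card_insert_of_notMem hyR, hcard]
      omega
    · intro S hS
      simp only [Finset.mem_filter] at hS
      obtain ⟨-, hxS, hyS, -⟩ := hS
      show insert x (insert y ((S.erase x).erase y)) = S
      rw [Finset.insert_erase (Finset.mem_erase.mpr ⟨hxy.symm, hyS⟩), Finset.insert_erase hxS]
    · intro R hR
      rw [Finset.mem_powersetCard] at hR
      obtain ⟨hsub, -⟩ := hR
      have hyR : y ∉ R := fun h => (Finset.mem_erase.mp (hsub h)).1 rfl
      have hxR : x ∉ R := fun h => (Finset.mem_erase.mp (Finset.mem_of_mem_erase (hsub h))).1 rfl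
      have hxyR : x ∉ insert y R := by
        simp only [Finset.mem_insert]
        rintro (h | h)
        · exact hxy h
        · exact hxR h
      show ((insert x (insert y R)).erase x).erase y = R
      rw [Finset.erase_insert hxyR, Finset.erase_insert hyR]
  rw [hkey, Finset.card_powersetCard]
  congr 1
  rw [Finset.card_erase_of_mem (Finset.mem_erase.mpr ⟨hxy.symm, Finset.mem_univ y⟩),
    Finset.card_erase_of_mem (Finset.mem_univ x)]
  simp only [Finset.card_univ, Fintype.card_fin]
  omega

lemma card_filter_card_eq {n₂ t : ℕ} :
    (Finset.filter (fun T : Finset (Fin n₂) => T.card = t) Finset.univ).card = n₂.choose t := by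
  classical
  have : Finset.filter (fun T : Finset (Fin n₂) => T.card = t) Finset.univ
      = Finset.powersetCard t Finset.univ := by
    ext T
    simp [Finset.mem_powersetCard, Finset.subset_univ]
  rw [this, Finset.card_powersetCard]
  simp

end KstPlusProof

/-- For `s, t ≥ 2`, the number of copies of `K_{s,t}⁺` in the graph obtained from the
complete bipartite graph with parts of sizes `n₁, n₂` by adding one edge inside the first
part equals `C(n₂, t) · C(n₁ − 2, s − 2)`. -/
theorem copies_KstPlus_bipartitePlus (s t : ℕ) (hs : 2 ≤ s) (ht : 2 ≤ t)
    (a b : Fin s) (hab : a ≠ b)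
    (n₁ n₂ : ℕ) (hn₁ : 2 ≤ n₁)
    (x y : Fin n₁) (hxy : x ≠ y)
    (H : SimpleGraph (Fin n₁ ⊕ Fin n₂))
    (hH : H = completeBipartiteGraph (Fin n₁) (Fin n₂) ⊔
      SimpleGraph.fromEdgeSet {s(Sum.inl x, Sum.inl y)}) :
    copyCount (Kst_plus s t a b) H = n₂.choose t * (n₁ - 2).choose (s - 2) := by
  classical
  subst hH
  open KstPlusProof Sum SimpleGraph in
  rw [_root_.copyCount]
  set m : Finset (Fin n₁) × Finset (Fin n₂) → (GP (Fin n₁) (Fin n₂) x y).Subgraph :=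
    fun P => (⊤ : (GP (Fin n₁) (Fin n₂) x y).Subgraph).induce
      (inl '' (P.1 : Set (Fin n₁)) ∪ inr '' (P.2 : Set (Fin n₂))) with hm
  have hminj : Function.Injective m := by
    intro P Q h
    have hv := congrArg SimpleGraph.Subgraph.verts h
    simp only [hm, SimpleGraph.Subgraph.induce_verts] at hv
    have h1 : P.1 = Q.1 := by
      ext u
      have := Set.ext_iff.mp hv (inl u)
      simpa using this
    have h2 : P.2 = Q.2 := by
      ext w
      have := Set.ext_iff.mp hv (inr w)
      simpa using this
    exact Prod.ext h1 h2
  have hsetEq : {H' : (GP (Fin n₁) (Fin n₂) x y).Subgraph |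
        Nonempty (H'.coe ≃g Kst_plus s t a b)}
      = m '' ↑((Finset.filter (fun S : Finset (Fin n₁) => x ∈ S ∧ y ∈ S ∧ S.card = s)
            Finset.univ) ×ˢ
          (Finset.filter (fun T : Finset (Fin n₂) => T.card = t) Finset.univ)) := by
    ext H'
    constructor
    · rintro ⟨e⟩
      obtain ⟨S, T, hxS, hyS, hSc, hTc, rfl⟩ := forward_struct hs ht a b hab x y hxy H' e
      exact ⟨(S, T), by simp [Finset.mem_product, hxS, hyS, hSc, hTc], rfl⟩
    · rintro ⟨⟨S, T⟩, hmem, rfl⟩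
      simp only [Finset.coe_filter, Finset.mem_coe, Finset.mem_product, Finset.mem_filter,
        Finset.mem_univ, true_and, Set.mem_setOf_eq] at hmem
      exact backward_iso hs ht a b hab x y hxy S T hmem.1.1 hmem.1.2.1 hmem.1.2.2 hmem.2
  rw [hsetEq, Set.ncard_image_of_injective _ hminj, Set.ncard_coe_finset,
    Finset.card_product, card_filter_pair_mem hs x y hxy, card_filter_card_eq, Nat.mul_comm]
end

section
/- Let r ≥ 2 and consider the function P(ξ₁,…,ξ_r) = (1/2)(∑_{i=1}^r ξ_i) ∏_{i=1}^r ξ_i on the domain S_ρ = {ξ ∈ ℝ^r : 0 ≤ ξ_i ≤ 1/r for all i, ∑ ξ_i = ρ} with (r−1)/r < ρ ≤ 1. Then the minimum of P over S_ρ is attained at the point (ρ − (r−1)/r, 1/r, …, 1/r) (up to permutation of coordinates). -/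
open Finset

/-- Weierstrass-type inequality: for `y i ∈ [0,1]`,
`∏ y i ≥ ∑ y i - (card s - 1)`. -/
lemma sum_sub_card_le_prod {ι : Type*} (s : Finset ι) (y : ι → ℝ)
    (h0 : ∀ i ∈ s, 0 ≤ y i) (h1 : ∀ i ∈ s, y i ≤ 1) :
    (∑ i ∈ s, y i) - ((s.card : ℝ) - 1) ≤ ∏ i ∈ s, y i := by
  classical
  induction s using Finset.cons_induction with
  | empty => simp
  | cons a s ha ih =>
    rw [Finset.sum_cons, Finset.prod_cons, Finset.card_cons]
    have h0a : 0 ≤ y a := h0 a (Finset.mem_cons_self a s)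
    have h1a : y a ≤ 1 := h1 a (Finset.mem_cons_self a s)
    have ih' := ih (fun i hi => h0 i (Finset.mem_cons_of_mem hi))
      (fun i hi => h1 i (Finset.mem_cons_of_mem hi))
    set S : ℝ := (∑ i ∈ s, y i) - ((s.card : ℝ) - 1) with hS
    have hS1 : S ≤ 1 := by
      have : ∑ i ∈ s, y i ≤ ∑ i ∈ s, (1 : ℝ) :=
        Finset.sum_le_sum (fun i hi => h1 i (Finset.mem_cons_of_mem hi))
      simp only [Finset.sum_const, nsmul_eq_mul, mul_one] at this
      simp only [hS]; linarith
    have key : y a + S - 1 ≤ y a * S := by nlinarith [mul_nonneg h0a (sub_nonneg.2 hS1)]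
    have h2 : y a * S ≤ y a * ∏ i ∈ s, y i := mul_le_mul_of_nonneg_left ih' h0a
    push_cast
    simp only [hS] at key h2 ⊢
    linarith

/-- For `r ≥ 2` and `(r−1)/r < ρ ≤ 1`, the minimum of
`P(ξ) = (1/2)(∑ ξ_i) ∏ ξ_i` over
`S_ρ = {ξ ∈ [0, 1/r]^r : ∑ ξ_i = ρ}` is attained at `(ρ − (r−1)/r, 1/r, …, 1/r)`. -/
theorem min_P_at_corner (r : ℕ) (hr : 2 ≤ r) (ρ : ℝ)
    (hρ₁ : ((r : ℝ) - 1) / r < ρ) (hρ₂ : ρ ≤ 1)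
    (P : (Fin r → ℝ) → ℝ)
    (hP : P = fun ξ => (1 / 2) * (∑ i, ξ i) * ∏ i, ξ i)
    (ξstar : Fin r → ℝ) (i0 : Fin r) (hi0 : (i0 : ℕ) = 0)
    (hξstar : ξstar = fun i => if i = i0 then ρ - ((r : ℝ) - 1) / r else 1 / r) :
    ((∀ i, 0 ≤ ξstar i ∧ ξstar i ≤ 1 / r) ∧ ∑ i, ξstar i = ρ) ∧
      ∀ ξ : Fin r → ℝ, (∀ i, 0 ≤ ξ i ∧ ξ i ≤ 1 / r) → ∑ i, ξ i = ρ →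
        P ξstar ≤ P ξ := by
  have hr2 : (2 : ℝ) ≤ (r : ℝ) := by exact_mod_cast hr
  have hr0 : (0 : ℝ) < r := by linarith
  have hsplit : ((r : ℝ) - 1) / r + 1 / r = 1 := by field_simp; ring
  have ht0 : 0 ≤ ρ - ((r : ℝ) - 1) / r := le_of_lt (by linarith)
  have ht1 : ρ - ((r : ℝ) - 1) / r ≤ 1 / r := by linarith
  have hρ0 : 0 < ρ := by
    have : (0 : ℝ) ≤ ((r : ℝ) - 1) / r := div_nonneg (by linarith) (le_of_lt hr0)
    linarith
  have hcard : ((Finset.univ.erase i0).card : ℝ) = (r : ℝ) - 1 := by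
    rw [Finset.card_erase_of_mem (Finset.mem_univ i0), Finset.card_univ, Fintype.card_fin]
    have h1 : (1:ℕ) ≤ r := by omega
    push_cast [h1]
    ring
  have hsum : ∑ i, ξstar i = ρ := by
    simp only [hξstar]
    rw [← Finset.add_sum_erase _ _ (Finset.mem_univ i0), if_pos rfl,
      Finset.sum_congr rfl (fun i hi => if_neg (Finset.ne_of_mem_erase hi)),
      Finset.sum_const, nsmul_eq_mul, hcard]
    field_simp
    ring
  refine ⟨⟨fun i => ?_, hsum⟩, fun ξ hbox hs => ?_⟩
  · rw [hξstar]
    by_cases h : i = i0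
    · simp only [h, if_true]; exact ⟨ht0, ht1⟩
    · simp only [if_neg h]; exact ⟨by positivity, le_refl _⟩
  · have hprodstar : ∏ i, ξstar i = (ρ - ((r : ℝ) - 1) / r) * (1 / r) ^ (r - 1) := by
      simp only [hξstar]
      rw [← Finset.mul_prod_erase _ _ (Finset.mem_univ i0), if_pos rfl,
        Finset.prod_congr rfl (fun i hi => if_neg (Finset.ne_of_mem_erase hi)),
        Finset.prod_const, Finset.card_erase_of_mem (Finset.mem_univ i0),
        Finset.card_univ, Fintype.card_fin]
    have key : (ρ - ((r : ℝ) - 1) / r) * (1 / r) ^ (r - 1) ≤ ∏ i, ξ i := by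
      have hW := sum_sub_card_le_prod Finset.univ (fun i => (r : ℝ) * ξ i)
        (fun i _ => mul_nonneg (le_of_lt hr0) (hbox i).1)
        (fun i _ => by
          show (r : ℝ) * ξ i ≤ 1
          have h2 := (hbox i).2
          rw [le_div_iff₀ hr0] at h2
          linarith)
      simp only [Finset.card_univ, Fintype.card_fin, ← Finset.mul_sum, hs] at hW
      have hprodmul : ∏ i, ((r : ℝ) * ξ i) = (r : ℝ) ^ r * ∏ i, ξ i := by
        rw [Finset.prod_mul_distrib, Finset.prod_const, Finset.card_univ, Fintype.card_fin]
      rw [hprodmul] at hW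
      have hrr : (0 : ℝ) < (r : ℝ) ^ r := by positivity
      have expand : (ρ - ((r : ℝ) - 1) / r) * (1 / r) ^ (r - 1)
          = ((r : ℝ) * ρ - ((r : ℝ) - 1)) / (r : ℝ) ^ r := by
        have hpow : (r : ℝ) ^ r = (r : ℝ) ^ (r - 1) * r := by
          rw [← pow_succ]; congr 1; omega
        rw [hpow]
        field_simp
        have hinv : (r:ℝ)^(r-1) * ((r:ℝ)⁻¹)^(r-1) = 1 := by
          rw [← mul_pow, mul_inv_cancel₀ hr0.ne', one_pow]
        linear_combination (ρ * r - r + 1) * hinv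
      rw [expand, div_le_iff₀ hrr]
      nlinarith [hW]
    simp only [hP]
    rw [hsum, hs, hprodstar]
    have h12 : (0 : ℝ) ≤ 1 / 2 * ρ := by positivity
    calc (1 / 2) * ρ * ((ρ - ((r : ℝ) - 1) / r) * (1 / r) ^ (r - 1))
        ≤ (1 / 2) * ρ * ∏ i, ξ i := by
          apply mul_le_mul_of_nonneg_left key (by linarith)
      _ = (1 / 2) * ρ * ∏ i, ξ i := rfl
end

section
/- Let n be divisible by r, and let H be obtained from the complete r-partite graph with all parts of size n/r by adding two edges u₁v₁ and u₂v₂ inside the same part sharing exactly one common endpoint (v₁ = u₂). Then the number of copies of K_{r+2}−e in H containing both added edges equals (n/r)^{r−1}. -/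
/-- Auxiliary: the vertex-selection map of a copy. -/
def copySig {r n : ℕ} (i0 : Fin r) (hi0 : (i0 : ℕ) = 0)
    (u₁ v₁ v₂ : Σ _ : Fin r, Fin (n / r))
    (f : {i : Fin r // i ≠ i0} → Fin (n / r)) (j : Fin (r + 2)) :
    Σ _ : Fin r, Fin (n / r) :=
  if h0 : (j : ℕ) = 0 then u₁
  else if h1 : (j : ℕ) = 1 then v₂
  else if h2 : (j : ℕ) = 2 then v₁
  else
    ⟨⟨(j : ℕ) - 2, by have := j.isLt; omega⟩,
      f ⟨⟨(j : ℕ) - 2, by have := j.isLt; omega⟩, by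
        intro h
        have := congrArg Fin.val h
        simp only [hi0] at this
        omega⟩⟩

/-- Auxiliary: the subgraph associated to a selection `f`. -/
def copySub {r n : ℕ} {H : SimpleGraph (Σ _ : Fin r, Fin (n / r))} (i0 : Fin r)
    (hi0 : (i0 : ℕ) = 0) (u₁ v₁ v₂ : Σ _ : Fin r, Fin (n / r))
    (f : {i : Fin r // i ≠ i0} → Fin (n / r)) : H.Subgraph :=
  (⊤ : H.Subgraph).induce (Set.range (copySig i0 hi0 u₁ v₁ v₂ f))

set_option maxHeartbeats 2000000 in
/-- Let `r ∣ n` and let `H` be the complete `r`-partite graph with all parts of size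
`n/r`, plus two added edges `u₁v₁`, `v₁v₂` inside one part sharing exactly one endpoint.
Then the number of copies of `K_{r+2}−e` in `H` containing both added edges equals
`(n/r)^{r−1}`. -/
theorem copies_through_adjacent_pair (r n : ℕ) (hr : 2 ≤ r) (hdvd : r ∣ n)
    (h3 : 3 ≤ n / r)
    (u₁ v₁ v₂ : Σ _ : Fin r, Fin (n / r)) (i0 : Fin r) (hi0 : (i0 : ℕ) = 0)
    (hu₁ : u₁.1 = i0) (hv₁ : v₁.1 = i0) (hv₂ : v₂.1 = i0)
    (hne₁ : u₁ ≠ v₁) (hne₂ : v₁ ≠ v₂) (hne₃ : u₁ ≠ v₂)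
    (H : SimpleGraph (Σ _ : Fin r, Fin (n / r)))
    (hH : H = SimpleGraph.completeMultipartiteGraph (fun _ : Fin r => Fin (n / r)) ⊔
      SimpleGraph.fromEdgeSet {s(u₁, v₁), s(v₁, v₂)}) :
    Set.ncard {H' : H.Subgraph | Nonempty (H'.coe ≃g cliqueMinusEdge r) ∧
        s(u₁, v₁) ∈ H'.edgeSet ∧ s(v₁, v₂) ∈ H'.edgeSet} =
      (n / r) ^ (r - 1) := by
  classical
  set σ := copySig i0 hi0 u₁ v₁ v₂ with hσdef
  -- value facts
  have hval0 : ((0 : Fin (r + 2)) : ℕ) = 0 := rfl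
  have hval1 : ((1 : Fin (r + 2)) : ℕ) = 1 := rfl
  have hval2 : ((2 : Fin (r + 2)) : ℕ) = 2 := by
    have : ((2 : Fin (r + 2)) : ℕ) = 2 % (r + 2) := rfl
    rw [this, Nat.mod_eq_of_lt (by omega)]
  have hpair : ∀ (a b : Fin r) (x y : Fin (n / r)), a = b → x = y →
      (⟨a, x⟩ : Σ _ : Fin r, Fin (n / r)) = ⟨b, y⟩ := by
    rintro a b x y rfl rfl; rfl
  -- adjacency characterization of H
  have hAdj : ∀ x y : Σ _ : Fin r, Fin (n / r), H.Adj x y ↔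
      (x.1 ≠ y.1 ∨ ((s(x, y) = s(u₁, v₁) ∨ s(x, y) = s(v₁, v₂)) ∧ x ≠ y)) := by
    subst hH
    intro x y
    simp only [SimpleGraph.sup_adj, SimpleGraph.comap_adj, SimpleGraph.top_adj,
      SimpleGraph.fromEdgeSet_adj, Set.mem_insert_iff, Set.mem_singleton_iff]
  -- no adjacency between u₁ and v₂
  have hnadj : ¬ H.Adj u₁ v₂ := by
    rw [hAdj]
    rintro (h | ⟨hs | hs, -⟩)
    · exact h (by rw [hu₁, hv₂])
    · rw [Sym2.eq_iff] at hs
      rcases hs with ⟨h1, h2⟩ | ⟨h1, h2⟩ <;> simp_all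
    · rw [Sym2.eq_iff] at hs
      rcases hs with ⟨h1, h2⟩ | ⟨h1, h2⟩ <;> simp_all
  -- basic adjacencies
  have hadj₁ : H.Adj u₁ v₁ := (hAdj u₁ v₁).2 (Or.inr ⟨Or.inl rfl, hne₁⟩)
  have hadj₂ : H.Adj v₁ v₂ := (hAdj v₁ v₂).2 (Or.inr ⟨Or.inr rfl, hne₂⟩)
  -- basic facts about σ values
  have hσ0 : ∀ f, σ f 0 = u₁ := by
    intro f; simp [hσdef, copySig, hval0]
  have hσ1 : ∀ f, σ f 1 = v₂ := by
    intro f; simp [hσdef, copySig, hval1]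
  have hσ2 : ∀ f, σ f 2 = v₁ := by
    intro f; simp [hσdef, copySig, hval2, Nat.mod_eq_of_lt (show 2 < r + 2 by omega)]
  have hσbig : ∀ f (j : Fin (r + 2)) (hj : 3 ≤ (j : ℕ)),
      σ f j = ⟨⟨(j : ℕ) - 2, by have := j.isLt; omega⟩,
        f ⟨⟨(j : ℕ) - 2, by have := j.isLt; omega⟩, by
          intro h; have := congrArg Fin.val h; simp only [hi0] at this; omega⟩⟩ := by
    intro f j hj
    simp only [hσdef, copySig]
    rw [dif_neg (by omega), dif_neg (by omega), dif_neg (by omega)]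
  have hσfst : ∀ f (j : Fin (r + 2)), 3 ≤ (j : ℕ) → ((σ f j).1 : ℕ) = (j : ℕ) - 2 := by
    intro f j hj; rw [hσbig f j hj]
  have hσfst' : ∀ f (j : Fin (r + 2)), (j : ℕ) < 3 → ((σ f j).1 : ℕ) = 0 := by
    intro f j hj
    simp only [hσdef, copySig]
    by_cases h0 : (j : ℕ) = 0
    · rw [dif_pos h0, hu₁]; exact hi0
    · by_cases h1 : (j : ℕ) = 1
      · rw [dif_neg h0, dif_pos h1, hv₂]; exact hi0
      · rw [dif_neg h0, dif_neg h1, dif_pos (by omega), hv₁]; exact hi0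
  -- injectivity of σ
  have hsmall : ∀ j : Fin (r + 2), (j : ℕ) < 3 → j = 0 ∨ j = 1 ∨ j = 2 := by
    intro j hj
    have : (j : ℕ) = 0 ∨ (j : ℕ) = 1 ∨ (j : ℕ) = 2 := by omega
    rcases this with h | h | h
    · exact Or.inl (Fin.ext (by rw [hval0, h]))
    · exact Or.inr (Or.inl (Fin.ext (by rw [hval1, h])))
    · exact Or.inr (Or.inr (Fin.ext (by rw [hval2, h])))
  have hσinj : ∀ f, Function.Injective (σ f) := by
    intro f j k h
    have hj := j.isLt; have hk := k.isLt
    rcases lt_or_ge (j : ℕ) 3 with hj3 | hj3 <;> rcases lt_or_ge (k : ℕ) 3 with hk3 | hk3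
    · rcases hsmall j hj3 with rfl | rfl | rfl <;> rcases hsmall k hk3 with rfl | rfl | rfl <;>
        simp only [hσ0, hσ1, hσ2] at h <;> first
        | rfl
        | exact absurd h hne₁ | exact absurd h hne₂ | exact absurd h hne₃
        | exact absurd h.symm hne₁ | exact absurd h.symm hne₂ | exact absurd h.symm hne₃
    · have e1 := hσfst' f j hj3
      have e2 := hσfst f k hk3
      rw [h] at e1; omega
    · have e1 := hσfst f j hj3
      have e2 := hσfst' f k hk3
      rw [h] at e1; omega
    · have e1 := hσfst f j hj3
      have e2 := hσfst f k hk3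
      rw [h] at e1
      exact Fin.ext (by omega)
  -- σ adjacency matches cliqueMinusEdge
  have hclique : ∀ j k : Fin (r + 2), (cliqueMinusEdge r).Adj j k ↔ ((j : ℕ) ≠ (k : ℕ) ∧
      ¬((j : ℕ) = 0 ∧ (k : ℕ) = 1) ∧ ¬((j : ℕ) = 1 ∧ (k : ℕ) = 0)) := by
    intro j k
    simp only [cliqueMinusEdge, SimpleGraph.deleteEdges_adj, SimpleGraph.top_adj,
      Set.mem_singleton_iff, Sym2.eq_iff, Fin.ext_iff, hval0, hval1]
    omega
  have hσadj : ∀ f (j k : Fin (r + 2)),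
      H.Adj (σ f j) (σ f k) ↔ (cliqueMinusEdge r).Adj j k := by
    intro f j k
    have hj := j.isLt; have hk := k.isLt
    rw [hAdj, hclique]
    rcases lt_or_ge (j : ℕ) 3 with hj3 | hj3 <;> rcases lt_or_ge (k : ℕ) 3 with hk3 | hk3
    · rcases hsmall j hj3 with rfl | rfl | rfl <;> rcases hsmall k hk3 with rfl | rfl | rfl
      · rw [hσ0 f]
        exact iff_of_false (fun h => H.loopless.irrefl u₁ ((hAdj u₁ u₁).2 h))
          (by simp [hval0, hval1, hval2])
      · rw [hσ0 f, hσ1 f]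
        exact iff_of_false (fun h => hnadj ((hAdj u₁ v₂).2 h))
          (by simp [hval0, hval1, hval2])
      · rw [hσ0 f, hσ2 f]
        exact iff_of_true ((hAdj u₁ v₁).1 hadj₁) (by simp [hval0, hval1, hval2, Nat.mod_eq_of_lt (show 2 < r + 2 by omega)])
      · rw [hσ1 f, hσ0 f]
        exact iff_of_false (fun h => hnadj (((hAdj v₂ u₁).2 h).symm))
          (by simp [hval0, hval1, hval2])
      · rw [hσ1 f]
        exact iff_of_false (fun h => H.loopless.irrefl v₂ ((hAdj v₂ v₂).2 h))
          (by simp [hval0, hval1, hval2])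
      · rw [hσ1 f, hσ2 f]
        exact iff_of_true ((hAdj v₂ v₁).1 hadj₂.symm) (by simp [hval0, hval1, hval2, Nat.mod_eq_of_lt (show 2 < r + 2 by omega)])
      · rw [hσ2 f, hσ0 f]
        exact iff_of_true ((hAdj v₁ u₁).1 hadj₁.symm) (by simp [hval0, hval1, hval2, Nat.mod_eq_of_lt (show 2 < r + 2 by omega)])
      · rw [hσ2 f, hσ1 f]
        exact iff_of_true ((hAdj v₁ v₂).1 hadj₂) (by simp [hval0, hval1, hval2, Nat.mod_eq_of_lt (show 2 < r + 2 by omega)])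
      · rw [hσ2 f]
        exact iff_of_false (fun h => H.loopless.irrefl v₁ ((hAdj v₁ v₁).2 h))
          (by simp [hval0, hval1, hval2])
    · refine iff_of_true (Or.inl fun hfst => ?_) ⟨by omega, by omega, by omega⟩
      have e1 := hσfst' f j hj3
      have e2 := hσfst f k hk3
      rw [hfst] at e1; omega
    · refine iff_of_true (Or.inl fun hfst => ?_) ⟨by omega, by omega, by omega⟩
      have e1 := hσfst f j hj3
      have e2 := hσfst' f k hk3
      rw [hfst] at e1; omega
    · constructor
      · rintro (hfst | ⟨hs, hne⟩)
        · refine ⟨fun hjk => hfst ?_, by omega, by omega⟩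
          rw [Fin.ext hjk]
        · exfalso
          have e1 := hσfst f j hj3
          rcases hs with hs | hs <;> rw [Sym2.eq_iff] at hs <;>
            rcases hs with ⟨h1, -⟩ | ⟨h1, -⟩ <;> rw [h1] at e1 <;>
            simp only [hu₁, hv₁, hv₂, hi0] at e1 <;> omega
      · rintro ⟨hjk, -, -⟩
        refine Or.inl fun hfst => hjk ?_
        have e1 := hσfst f j hj3
        have e2 := hσfst f k hk3
        rw [hfst] at e1; omega
  -- the subgraph associated to f
  have hΦdef : ∀ f, (copySub i0 hi0 u₁ v₁ v₂ f : H.Subgraph) =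
      (⊤ : H.Subgraph).induce (Set.range (σ f)) := fun _ => rfl
  -- Φ has the right values
  have hΦmem : ∀ f, (copySub i0 hi0 u₁ v₁ v₂ f : H.Subgraph) ∈ {H' : H.Subgraph | Nonempty (H'.coe ≃g cliqueMinusEdge r) ∧
      s(u₁, v₁) ∈ H'.edgeSet ∧ s(v₁, v₂) ∈ H'.edgeSet} := by
    intro f
    refine ⟨⟨SimpleGraph.Iso.symm ⟨Equiv.ofInjective (σ f) (hσinj f), ?_⟩⟩, ?_, ?_⟩
    · intro j k
      constructor
      · rintro ⟨-, -, h'⟩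
        exact (hσadj f j k).1 h'
      · intro h
        exact ⟨⟨j, rfl⟩, ⟨k, rfl⟩, (hσadj f j k).2 h⟩
    · rw [SimpleGraph.Subgraph.mem_edgeSet, hΦdef]
      exact ⟨⟨0, hσ0 f⟩, ⟨2, hσ2 f⟩, hadj₁⟩
    · rw [SimpleGraph.Subgraph.mem_edgeSet, hΦdef]
      exact ⟨⟨2, hσ2 f⟩, ⟨1, hσ1 f⟩, hadj₂⟩
  have hival : ∀ i : {i : Fin r // i ≠ i0}, (i.1 : ℕ) ≠ 0 := by
    intro i hz
    exact i.2 (Fin.ext (by rw [hz, hi0]))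
  have hσval : ∀ f (j : Fin (r + 2)) (hj : 3 ≤ (j : ℕ)) (i : {i : Fin r // i ≠ i0}),
      ((i : {i : Fin r // i ≠ i0}).1 : ℕ) = (j : ℕ) - 2 → σ f j = ⟨i.1, f i⟩ := by
    intro f j hj i hiv
    rw [hσbig f j hj]
    exact hpair _ _ _ _ (Fin.ext hiv.symm)
      (congrArg f (Subtype.ext (Fin.ext hiv.symm)))
  have hσtop : ∀ f (i : {i : Fin r // i ≠ i0}),
      σ f ⟨((i : {i : Fin r // i ≠ i0}).1 : ℕ) + 2, by have := (i : {i : Fin r // i ≠ i0}).1.isLt; omega⟩ =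
        ⟨i.1, f i⟩ := by
    intro f i
    have h1 := hival i
    exact hσval f _ (by show 3 ≤ (i.1 : ℕ) + 2; omega) i
      (by show ((i.1 : ℕ)) = (i.1 : ℕ) + 2 - 2; omega)
  have hΦinj : Function.Injective (fun f => (copySub i0 hi0 u₁ v₁ v₂ f : H.Subgraph)) := by
    intro f g h
    simp only at h
    have hv : Set.range (σ f) = Set.range (σ g) := congrArg SimpleGraph.Subgraph.verts h
    funext i
    have h1 : (⟨i.1, f i⟩ : Σ _ : Fin r, Fin (n / r)) ∈ Set.range (σ g) :=
      hv ▸ ⟨_, hσtop f i⟩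
    obtain ⟨j, hj⟩ := h1
    have hj3 : 3 ≤ (j : ℕ) := by
      by_contra h'
      have h'' := hσfst' g j (by omega)
      rw [hj] at h''
      exact hival i h''
    have hfst := hσfst g j hj3
    rw [hj] at hfst
    dsimp only at hfst
    have hjlt := j.isLt
    have hjeq : j = ⟨(i.1 : ℕ) + 2, by have := i.1.isLt; omega⟩ := Fin.ext (by
      show (j : ℕ) = (i.1 : ℕ) + 2
      omega)
    rw [hjeq, hσtop g i] at hj
    obtain ⟨-, h2⟩ := Sigma.mk.inj_iff.1 hj
    exact (heq_iff_eq.1 h2).symm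
  have hΦsurj : ∀ H' ∈ {H' : H.Subgraph | Nonempty (H'.coe ≃g cliqueMinusEdge r) ∧
      s(u₁, v₁) ∈ H'.edgeSet ∧ s(v₁, v₂) ∈ H'.edgeSet}, ∃ f, (copySub i0 hi0 u₁ v₁ v₂ f : H.Subgraph) = H' := by
    rintro H' ⟨⟨e⟩, he1, he2⟩
    have hadj1' : H'.Adj u₁ v₁ := SimpleGraph.Subgraph.mem_edgeSet.1 he1
    have hadj2' : H'.Adj v₁ v₂ := SimpleGraph.Subgraph.mem_edgeSet.1 he2
    have hu1m : u₁ ∈ H'.verts := hadj1'.fst_mem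
    have hv1m : v₁ ∈ H'.verts := hadj1'.snd_mem
    have hv2m : v₂ ∈ H'.verts := hadj2'.snd_mem
    haveI : Fintype H'.verts := Fintype.ofEquiv (Fin (r + 2)) e.toEquiv.symm
    have hcard : Fintype.card H'.verts = r + 2 := by
      rw [← Fintype.card_fin (r + 2)]; exact Fintype.card_congr e.toEquiv
    have hnonadj_char : ∀ (a b : ↥H'.verts), (↑a : Σ _ : Fin r, Fin (n / r)) ≠ ↑b →
        ¬ H'.Adj ↑a ↑b → (e a = 0 ∧ e b = 1) ∨ (e a = 1 ∧ e b = 0) := by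
      intro a b hne hnadj'
      have hne' : a ≠ b := fun h => hne (congrArg _ h)
      have h1 : ¬ (cliqueMinusEdge r).Adj (e a) (e b) := by
        rw [e.map_rel_iff]
        exact fun h => hnadj' h
      have hne2 : e a ≠ e b := fun h => hne' (e.toEquiv.injective h)
      rw [hclique] at h1
      have hne2v : ((e a : Fin (r + 2)) : ℕ) ≠ ((e b : Fin (r + 2)) : ℕ) :=
        fun h => hne2 (Fin.ext h)
      have hv : (((e a : Fin (r + 2)) : ℕ) = 0 ∧ ((e b : Fin (r + 2)) : ℕ) = 1) ∨
          (((e a : Fin (r + 2)) : ℕ) = 1 ∧ ((e b : Fin (r + 2)) : ℕ) = 0) := by tauto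
      rcases hv with ⟨h1', h2'⟩ | ⟨h1', h2'⟩
      · exact Or.inl ⟨Fin.ext (by rw [hval0]; exact h1'), Fin.ext (by rw [hval1]; exact h2')⟩
      · exact Or.inr ⟨Fin.ext (by rw [hval1]; exact h1'), Fin.ext (by rw [hval0]; exact h2')⟩
    have hkey : ∀ x y, x ∈ H'.verts → y ∈ H'.verts → x ≠ y → ¬ H'.Adj x y →
        s(x, y) = s(u₁, v₂) := by
      intro x y hx hy hxy hnadj'
      have hd := hnonadj_char ⟨x, hx⟩ ⟨y, hy⟩ hxy hnadj'
      have hd0 := hnonadj_char ⟨u₁, hu1m⟩ ⟨v₂, hv2m⟩ hne₃ (fun h => hnadj (H'.adj_sub h))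
      rcases hd with ⟨ha, hb⟩ | ⟨ha, hb⟩ <;> rcases hd0 with ⟨ha0, hb0⟩ | ⟨ha0, hb0⟩
      · have h1 : (⟨x, hx⟩ : ↥H'.verts) = ⟨u₁, hu1m⟩ := e.injective (by rw [ha, ha0])
        have h2 : (⟨y, hy⟩ : ↥H'.verts) = ⟨v₂, hv2m⟩ := e.injective (by rw [hb, hb0])
        rw [show x = u₁ from congrArg Subtype.val h1, show y = v₂ from congrArg Subtype.val h2]
      · have h1 : (⟨x, hx⟩ : ↥H'.verts) = ⟨v₂, hv2m⟩ := e.injective (by rw [ha, hb0])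
        have h2 : (⟨y, hy⟩ : ↥H'.verts) = ⟨u₁, hu1m⟩ := e.injective (by rw [hb, ha0])
        rw [show x = v₂ from congrArg Subtype.val h1, show y = u₁ from congrArg Subtype.val h2, Sym2.eq_swap]
      · have h1 : (⟨x, hx⟩ : ↥H'.verts) = ⟨v₂, hv2m⟩ := e.injective (by rw [ha, hb0])
        have h2 : (⟨y, hy⟩ : ↥H'.verts) = ⟨u₁, hu1m⟩ := e.injective (by rw [hb, ha0])
        rw [show x = v₂ from congrArg Subtype.val h1, show y = u₁ from congrArg Subtype.val h2, Sym2.eq_swap]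
      · have h1 : (⟨x, hx⟩ : ↥H'.verts) = ⟨u₁, hu1m⟩ := e.injective (by rw [ha, ha0])
        have h2 : (⟨y, hy⟩ : ↥H'.verts) = ⟨v₂, hv2m⟩ := e.injective (by rw [hb, hb0])
        rw [show x = u₁ from congrArg Subtype.val h1, show y = v₂ from congrArg Subtype.val h2]
    have hfiber0 : ∀ w, w ∈ H'.verts → w.1 = i0 → w = u₁ ∨ w = v₁ ∨ w = v₂ := by
      intro w hw hwi
      by_contra hcon
      push_neg at hcon
      obtain ⟨hw1, hw2, hw3⟩ := hcon
      have hnotH : ¬ H.Adj u₁ w := by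
        rw [hAdj]
        rintro (hf | ⟨hs | hs, -⟩)
        · exact hf (by rw [hu₁, hwi])
        · rw [Sym2.eq_iff] at hs
          rcases hs with ⟨-, h2⟩ | ⟨h1, -⟩
          · exact hw2 h2
          · exact hne₁ h1
        · rw [Sym2.eq_iff] at hs
          rcases hs with ⟨h1, -⟩ | ⟨h1, -⟩
          · exact hne₁ h1
          · exact hne₃ h1
      have hs := hkey u₁ w hu1m hw (fun h => hw1 h.symm) (fun h => hnotH (H'.adj_sub h))
      rw [Sym2.eq_iff] at hs
      rcases hs with ⟨-, h2⟩ | ⟨h1, -⟩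
      · exact hw3 h2
      · exact hne₃ h1
    have hfiber1 : ∀ w w', w ∈ H'.verts → w' ∈ H'.verts → w.1 = w'.1 → w.1 ≠ i0 → w = w' := by
      intro w w' hw hw' heq hne0
      by_contra hcon
      have hnotH : ¬ H.Adj w w' := by
        rw [hAdj]
        rintro (hf | ⟨hs | hs, -⟩)
        · exact hf heq
        · rw [Sym2.eq_iff] at hs
          rcases hs with ⟨h1, -⟩ | ⟨h1, -⟩
          · exact hne0 (by rw [h1, hu₁])
          · exact hne0 (by rw [h1, hv₁])
        · rw [Sym2.eq_iff] at hs
          rcases hs with ⟨h1, -⟩ | ⟨h1, -⟩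
          · exact hne0 (by rw [h1, hv₁])
          · exact hne0 (by rw [h1, hv₂])
      have hs := hkey w w' hw hw' hcon (fun h => hnotH (H'.adj_sub h))
      rw [Sym2.eq_iff] at hs
      rcases hs with ⟨h1, -⟩ | ⟨h1, -⟩
      · exact hne0 (by rw [h1, hu₁])
      · exact hne0 (by rw [h1, hv₂])
    -- counting
    set V : Finset (Σ _ : Fin r, Fin (n / r)) := H'.verts.toFinset with hVdef
    have hVcard : V.card = r + 2 := by rw [hVdef, Set.toFinset_card]; exact hcard
    have hsum : ∑ i : Fin r, (V.filter (fun w => w.1 = i)).card = V.card :=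
      (Finset.card_eq_sum_card_fiberwise (fun x _ => Finset.mem_univ x.1)).symm
    have hle : ∀ i : Fin r, i ∈ Finset.univ →
        (V.filter (fun w => w.1 = i)).card ≤ (if i = i0 then 3 else 1) := by
      intro i _
      by_cases hii : i = i0
      · rw [if_pos hii]
        have hsub : V.filter (fun w => w.1 = i) ⊆ {u₁, v₁, v₂} := by
          intro w hw
          rw [Finset.mem_filter, hVdef, Set.mem_toFinset] at hw
          rcases hfiber0 w hw.1 (by rw [hw.2, hii]) with rfl | rfl | rfl <;> simp
        refine le_trans (Finset.card_le_card hsub) ?_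
        refine le_trans (Finset.card_insert_le _ _) (Nat.succ_le_succ ?_)
        refine le_trans (Finset.card_insert_le _ _) (Nat.succ_le_succ ?_)
        simp
      · rw [if_neg hii]
        refine Finset.card_le_one.2 ?_
        intro a ha b hb
        rw [Finset.mem_filter, hVdef, Set.mem_toFinset] at ha hb
        exact hfiber1 a b ha.1 hb.1 (ha.2.trans hb.2.symm) (by rw [ha.2]; exact hii)
    have hsumb : (∑ i : Fin r, (if i = i0 then 3 else 1)) = r + 2 := by
      have hsplit : ∀ i : Fin r, (if i = i0 then 3 else 1) = 1 + (if i = i0 then 2 else 0) := by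
        intro i; split <;> rfl
      rw [Finset.sum_congr rfl (fun i _ => hsplit i), Finset.sum_add_distrib]
      simp [Finset.sum_ite_eq']
    have heach := (Finset.sum_eq_sum_iff_of_le hle).1 (by rw [hsum, hVcard, hsumb])
    have hone : ∀ i : {i : Fin r // i ≠ i0}, ∃ w, V.filter (fun w => w.1 = i.1) = {w} := by
      intro i
      apply Finset.card_eq_one.1
      have h' := heach i.1 (Finset.mem_univ _)
      rw [if_neg i.2] at h'
      exact h'
    choose wi hwi using hone
    have hwmem : ∀ i, wi i ∈ H'.verts ∧ (wi i).1 = i.1 := by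
      intro i
      have h' : wi i ∈ V.filter (fun w => w.1 = i.1) := by
        rw [hwi i]; exact Finset.mem_singleton_self _
      rw [Finset.mem_filter, hVdef, Set.mem_toFinset] at h'
      exact h'
    refine ⟨fun i => (wi i).2, ?_⟩
    have hwi_eq : ∀ i : {i : Fin r // i ≠ i0},
        (⟨i.1, (wi i).2⟩ : Σ _ : Fin r, Fin (n / r)) = wi i :=
      fun i => hpair _ _ _ _ (hwmem i).2.symm rfl
    set f : {i : Fin r // i ≠ i0} → Fin (n / r) := fun i => (wi i).2 with hfdef
    have hvertseq : Set.range (σ f) = H'.verts := by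
      apply Set.eq_of_subset_of_subset
      · rintro _ ⟨j, rfl⟩
        rcases lt_or_ge (j : ℕ) 3 with hj3 | hj3
        · rcases hsmall j hj3 with rfl | rfl | rfl
          · rw [hσ0]; exact hu1m
          · rw [hσ1]; exact hv2m
          · rw [hσ2]; exact hv1m
        · have hjlt := j.isLt
          rw [hσval f j hj3 ⟨⟨(j : ℕ) - 2, by omega⟩, fun hc => by
            have := congrArg Fin.val hc
            simp only [hi0] at this
            omega⟩ rfl]
          rw [hwi_eq]
          exact (hwmem _).1
      · intro w hw
        by_cases hwi0 : w.1 = i0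
        · rcases hfiber0 w hw hwi0 with rfl | rfl | rfl
          · exact ⟨0, hσ0 f⟩
          · exact ⟨2, hσ2 f⟩
          · exact ⟨1, hσ1 f⟩
        · refine ⟨⟨((⟨w.1, hwi0⟩ : {i : Fin r // i ≠ i0}).1 : ℕ) + 2, by
            have := w.1.isLt; omega⟩, ?_⟩
          rw [hσtop f ⟨w.1, hwi0⟩, hwi_eq]
          have h' : w ∈ V.filter (fun x => x.1 = (⟨w.1, hwi0⟩ : {i : Fin r // i ≠ i0}).1) := by
            rw [Finset.mem_filter, hVdef, Set.mem_toFinset]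
            exact ⟨hw, rfl⟩
          rw [hwi ⟨w.1, hwi0⟩] at h'
          exact (Finset.mem_singleton.1 h').symm
    apply SimpleGraph.Subgraph.ext
    · exact hvertseq
    · funext x y
      apply propext
      constructor
      · rintro ⟨hx, hy, hxy⟩
        by_contra hc
        have hs := hkey x y (hvertseq ▸ hx) (hvertseq ▸ hy) hxy.ne hc
        rw [Sym2.eq_iff] at hs
        rcases hs with ⟨h1, h2⟩ | ⟨h1, h2⟩
        · rw [h1, h2] at hxy; exact hnadj hxy
        · rw [h1, h2] at hxy; exact hnadj hxy.symm
      · intro hxy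
        exact ⟨hvertseq.symm ▸ hxy.fst_mem, hvertseq.symm ▸ hxy.snd_mem, H'.adj_sub hxy⟩
  have hset : {H' : H.Subgraph | Nonempty (H'.coe ≃g cliqueMinusEdge r) ∧
      s(u₁, v₁) ∈ H'.edgeSet ∧ s(v₁, v₂) ∈ H'.edgeSet} = Set.range (fun f => (copySub i0 hi0 u₁ v₁ v₂ f : H.Subgraph)) := by
    apply Set.eq_of_subset_of_subset
    · intro H' hH'
      obtain ⟨f, hf⟩ := hΦsurj H' hH'
      exact ⟨f, hf⟩
    · rintro _ ⟨f, rfl⟩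
      exact hΦmem f
  rw [hset, ← Nat.card_coe_set_eq, Nat.card_range_of_injective hΦinj,
    Nat.card_eq_fintype_card, Fintype.card_fun, Fintype.card_fin]
  congr 1
  rw [Fintype.card_subtype_compl, Fintype.card_fin, Fintype.card_subtype_eq]
end
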